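/- arXiv:0705.4539 — 4 statements merged into one kernel-verified Lean document; each statement's English description precedes it below -/
import Mathlib

section
/- Suppose m21 is even. Then for all i, k ∈ ℤ/2ℤ and j, l ∈ ℤ one has [t_0^i t^{j m₂}, t_0^k t^{l m₂}] = δ_{i+k,0} δ_{j+l,0} j q^{−j² m21 m22} (m21 c1 + m22 c2); consequently the derived subalgebra of L_0 is the one-dimensional span of the central element m21 c1 + m22 c2, i.e. L_0 is a Heisenberg Lie algebra. -/
open scoped BigOperators

noncomputable section

namespace QTorus

/-- The sign `(−1)^{a·i}` for `i ∈ ℤ/2ℤ`: it is `(−1)^a` if `i = 1` and `1` if `i = 0`. -/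
def sgn (a : ℤ) (i : ZMod 2) : ℂ := if i = 0 then 1 else (-1 : ℂ) ^ a

/-- `q` is generic: nonzero and not a root of unity. -/
def Generic (q : ℂ) : Prop := q ≠ 0 ∧ ∀ n : ℤ, n ≠ 0 → q ^ n ≠ 1

/-- `{b1, b2}` is a ℤ-basis of `ℤ²`. -/
def IsZBasis (b1 b2 : ℤ × ℤ) : Prop :=
  b1.1 * b2.2 - b1.2 * b2.1 = 1 ∨ b1.1 * b2.2 - b1.2 * b2.1 = -1

/-- The determinant `α = m11 m22 − m12 m21`. -/
def detZ (m₁ m₂ : ℤ × ℤ) : ℤ := m₁.1 * m₂.2 - m₁.2 * m₂.1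

/-- Presentation of the Lie algebra `L` of the paper: basis
`{t_0^i t^m : i ∈ ℤ/2ℤ, m ∈ ℤ²} ∖ {t_0^0 t^{(0,0)}}` together with the central elements
`c1, c2`, where `t_0^0 t^{(0,0)}` is read as `0`, and the Lie bracket of the paper. -/
structure LData (q : ℂ) (L : Type) [LieRing L] [LieAlgebra ℂ L] where
  t : ZMod 2 → ℤ × ℤ → L
  c1 : L
  c2 : L
  t00 : t 0 (0, 0) = 0
  indep : LinearIndependent ℂ
    (Sum.elim (fun x : {p : ZMod 2 × (ℤ × ℤ) // p ≠ (0, (0, 0))} => t x.1.1 x.1.2)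
      (fun k : Fin 2 => if k = 0 then c1 else c2))
  span_eq : Submodule.span ℂ
    ((Set.range fun p : ZMod 2 × (ℤ × ℤ) => t p.1 p.2) ∪ {c1, c2}) = ⊤
  bracket_tt : ∀ (i j : ZMod 2) (m n : ℤ × ℤ),
    ⁅t i m, t j n⁆ =
      (sgn m.1 j * q ^ (m.2 * n.1) - sgn n.1 i * q ^ (m.1 * n.2)) •
          t (i + j) (m.1 + n.1, m.2 + n.2) +
        (if i + j = 0 ∧ m + n = 0 then sgn m.1 j * q ^ (m.2 * n.1) else 0) •
          ((m.1 : ℂ) • c1 + (m.2 : ℂ) • c2)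
  c1_central : ∀ x : L, ⁅c1, x⁆ = 0
  c2_central : ∀ x : L, ⁅c2, x⁆ = 0

variable {q : ℂ} {L : Type} [LieRing L] [LieAlgebra ℂ L]

/-- The degree-`j` component of the ℤ-grading of `L` associated with the ℤ-basis
`{m₁, m₂}` of `ℤ²`. -/
def Lj (D : LData q L) (m₁ m₂ : ℤ × ℤ) (j : ℤ) : Submodule ℂ L :=
  Submodule.span ℂ
    ((Set.range fun p : ZMod 2 × ℤ => D.t p.1 (j • m₁ + p.2 • m₂)) ∪
      if j = 0 then {D.c1, D.c2} else ∅)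

/-- A ℤ-graded module structure on an `L`-module `V`. -/
structure GradedRep (D : LData q L) (m₁ m₂ : ℤ × ℤ) (V : Type) [AddCommGroup V]
    [Module ℂ V] [LieRingModule L V] [LieModule ℂ L V] where
  comp : ℤ → Submodule ℂ V
  internal : DirectSum.IsInternal comp
  lie_mem : ∀ (j k : ℤ), ∀ x ∈ Lj D m₁ m₂ j, ∀ v ∈ comp k, ⁅x, v⁆ ∈ comp (k + j)

variable {D : LData q L} {m₁ m₂ : ℤ × ℤ} {V : Type} [AddCommGroup V] [Module ℂ V]
  [LieRingModule L V] [LieModule ℂ L V]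

/-- A Lie submodule is graded if it is the sum of its homogeneous pieces. -/
def GradedRep.IsGradedSub (G : GradedRep D m₁ m₂ V) (N : LieSubmodule ℂ L V) : Prop :=
  (N : Submodule ℂ V) = ⨆ k : ℤ, (N : Submodule ℂ V) ⊓ G.comp k

/-- Irreducibility as a ℤ-graded module. -/
def GradedRep.IsIrreducible (G : GradedRep D m₁ m₂ V) : Prop :=
  (∃ v : V, v ≠ 0) ∧ ∀ N : LieSubmodule ℂ L V, G.IsGradedSub N → N = ⊥ ∨ N = ⊤

/-- Quasifiniteness: all homogeneous components are finite dimensional. -/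
def GradedRep.Quasifinite (G : GradedRep D m₁ m₂ V) : Prop :=
  ∀ k : ℤ, FiniteDimensional ℂ (G.comp k)

/-- Uniform boundedness of the dimensions of the homogeneous components. -/
def GradedRep.UniformlyBounded (G : GradedRep D m₁ m₂ V) : Prop :=
  ∃ N : ℕ, ∀ k : ℤ, Module.rank ℂ (G.comp k) ≤ (N : Cardinal)

/-- Generalized highest weight module corresponding to the ℤ-basis `{b1, b2}`. -/
def GradedRep.IsGHWFor (G : GradedRep D m₁ m₂ V) (b1 b2 : ℤ × ℤ) : Prop :=
  IsZBasis b1 b2 ∧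
    ∃ (dg : ℤ) (v : V), v ∈ G.comp dg ∧ v ≠ 0 ∧
      LieSubmodule.lieSpan ℂ L {v} = ⊤ ∧
      ∀ (a b : ℕ) (i : ZMod 2), ⁅D.t i ((a : ℤ) • b1 + (b : ℤ) • b2), v⁆ = 0

/-- Generalized highest weight module. -/
def GradedRep.IsGHW (G : GradedRep D m₁ m₂ V) : Prop := ∃ b1 b2 : ℤ × ℤ, G.IsGHWFor b1 b2

/-- Highest weight module. -/
def GradedRep.IsHW (G : GradedRep D m₁ m₂ V) : Prop :=
  ∃ (dg : ℤ) (v : V), v ∈ G.comp dg ∧ v ≠ 0 ∧ LieSubmodule.lieSpan ℂ L {v} = ⊤ ∧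
    ∀ j : ℤ, 0 < j → ∀ x ∈ Lj D m₁ m₂ j, ⁅x, v⁆ = 0

/-- Lowest weight module. -/
def GradedRep.IsLW (G : GradedRep D m₁ m₂ V) : Prop :=
  ∃ (dg : ℤ) (v : V), v ∈ G.comp dg ∧ v ≠ 0 ∧ LieSubmodule.lieSpan ℂ L {v} = ⊤ ∧
    ∀ j : ℤ, j < 0 → ∀ x ∈ Lj D m₁ m₂ j, ⁅x, v⁆ = 0


/-- if `m21` is even, then
`[t_0^i t^{j m₂}, t_0^k t^{l m₂}] = δ_{i+k,0} δ_{j+l,0} j q^{−j² m21 m22} (m21 c1 + m22 c2)`,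
and consequently the derived subalgebra of `L₀` is the span of the central element
`m21 c1 + m22 c2`, i.e. `L₀` is a Heisenberg Lie algebra. -/
theorem L0_heisenberg_of_even (q : ℂ) (hq : Generic q)
    {L : Type} [LieRing L] [LieAlgebra ℂ L] (D : LData q L)
    (m₁ m₂ : ℤ × ℤ) (hb : IsZBasis m₁ m₂) (heven : Even m₂.1) :
    (∀ (i k : ZMod 2) (j l : ℤ),
      ⁅D.t i (j • m₂), D.t k (l • m₂)⁆ =
        (if i + k = 0 ∧ j + l = 0 then (j : ℂ) * q ^ (-(j ^ 2 * m₂.1 * m₂.2)) else 0) •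
          ((m₂.1 : ℂ) • D.c1 + (m₂.2 : ℂ) • D.c2)) ∧
    Submodule.span ℂ {z : L | ∃ x ∈ Lj D m₁ m₂ 0, ∃ y ∈ Lj D m₁ m₂ 0, z = ⁅x, y⁆} =
      Submodule.span ℂ {(m₂.1 : ℂ) • D.c1 + (m₂.2 : ℂ) • D.c2} := by
  have hq0 := hq.1
  have hm2 : m₂ ≠ 0 := by
    intro h
    rcases hb with h1 | h1 <;> · rw [h] at h1; simp at h1
  have hsgn : ∀ (a : ℤ) (i : ZMod 2), Even a → sgn a i = 1 := by
    intro a i ha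
    unfold sgn
    split
    · rfl
    · exact ha.neg_one_zpow
  have part1 : ∀ (i k : ZMod 2) (j l : ℤ), ⁅D.t i (j • m₂), D.t k (l • m₂)⁆ =
      (if i + k = 0 ∧ j + l = 0 then (j : ℂ) * q ^ (-(j ^ 2 * m₂.1 * m₂.2)) else 0) •
        ((m₂.1 : ℂ) • D.c1 + (m₂.2 : ℂ) • D.c2) := by
    intro i k j l
    rw [D.bracket_tt]
    have h1 : (j • m₂).1 = j * m₂.1 := by simp [smul_eq_mul]
    have h2 : (j • m₂).2 = j * m₂.2 := by simp [smul_eq_mul]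
    have h3 : (l • m₂).1 = l * m₂.1 := by simp [smul_eq_mul]
    have h4 : (l • m₂).2 = l * m₂.2 := by simp [smul_eq_mul]
    rw [h1, h2, h3, h4, hsgn _ k (heven.mul_left j), hsgn _ i (heven.mul_left l)]
    have hexp : j * m₂.2 * (l * m₂.1) = j * m₂.1 * (l * m₂.2) := by ring
    rw [hexp, one_mul, sub_self, zero_smul, zero_add]
    have hcond : (j • m₂ + l • m₂ = 0) ↔ j + l = 0 := by
      rw [← add_smul]
      constructor
      · intro h
        rcases smul_eq_zero.mp h with h' | h'
        · exact h'
        · exact absurd h' hm2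
      · intro h; rw [h, zero_smul]
    by_cases hik : i + k = 0
    · by_cases hjl : j + l = 0
      · rw [if_pos ⟨hik, hcond.mpr hjl⟩, if_pos ⟨hik, hjl⟩]
        have hl : l = -j := by linarith
        subst hl
        have he : j * m₂.1 * (-j * m₂.2) = -(j ^ 2 * m₂.1 * m₂.2) := by ring
        rw [he, smul_add, smul_add, smul_smul, smul_smul, smul_smul, smul_smul]
        push_cast
        congr 1 <;> · congr 1; ring
      · rw [if_neg (fun h => hjl (hcond.mp h.2)), if_neg (fun h => hjl h.2)]; simp
    · rw [if_neg (fun h => hik h.1), if_neg (fun h => hik h.1)]; simp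
  refine ⟨part1, ?_⟩
  set C : L := (m₂.1 : ℂ) • D.c1 + (m₂.2 : ℂ) • D.c2 with hC
  have hmem : ∀ (i : ZMod 2) (n : ℤ), D.t i (n • m₂) ∈ Lj D m₁ m₂ 0 := by
    intro i n
    exact Submodule.subset_span (Or.inl ⟨(i, n), by simp⟩)
  apply le_antisymm
  · rw [Submodule.span_le]
    rintro z ⟨x, hx, y, hy, rfl⟩
    have hL0 : Lj D m₁ m₂ 0 = Submodule.span ℂ
        ((Set.range fun p : ZMod 2 × ℤ => D.t p.1 (p.2 • m₂)) ∪ {D.c1, D.c2}) := by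
      simp [Lj]
    rw [hL0] at hx hy
    induction hx using Submodule.span_induction with
    | mem x hx =>
        rcases hx with ⟨p, rfl⟩ | hx
        · induction hy using Submodule.span_induction with
          | mem y hy =>
              rcases hy with ⟨r, rfl⟩ | hy
              · rw [part1]
                exact Submodule.smul_mem _ _ (Submodule.mem_span_singleton_self _)
              · rcases hy with rfl | rfl
                · rw [← lie_skew, D.c1_central, neg_zero]; simp
                · rw [← lie_skew, D.c2_central, neg_zero]; simp
          | zero => simp
          | add y1 y2 hy1 hy2 ih1 ih2 => rw [lie_add]; exact Submodule.add_mem _ ih1 ih2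
          | smul a y hy ih => rw [lie_smul]; exact Submodule.smul_mem _ a ih
        · rcases hx with rfl | rfl
          · rw [D.c1_central]; simp
          · rw [D.c2_central]; simp
    | zero => simp
    | add x1 x2 hx1 hx2 ih1 ih2 => rw [add_lie]; exact Submodule.add_mem _ ih1 ih2
    | smul a x hx ih => rw [smul_lie]; exact Submodule.smul_mem _ a ih
  · rw [Submodule.span_le, Set.singleton_subset_iff]
    have hz : ⁅D.t 0 ((1:ℤ) • m₂), D.t 0 ((-1:ℤ) • m₂)⁆ ∈
        {z : L | ∃ x ∈ Lj D m₁ m₂ 0, ∃ y ∈ Lj D m₁ m₂ 0, z = ⁅x, y⁆} :=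
      ⟨_, hmem 0 1, _, hmem 0 (-1), rfl⟩
    have heq := part1 0 0 1 (-1)
    rw [if_pos ⟨by simp, by ring⟩] at heq
    have hCeq : C = (q ^ (m₂.1 * m₂.2)) • ⁅D.t 0 ((1:ℤ) • m₂), D.t 0 ((-1:ℤ) • m₂)⁆ := by
      rw [heq, smul_smul]
      have h1 : (q ^ (m₂.1 * m₂.2)) * (((1:ℤ) : ℂ) * q ^ (-((1:ℤ) ^ 2 * m₂.1 * m₂.2))) = 1 := by
        rw [show -((1:ℤ) ^ 2 * m₂.1 * m₂.2) = -(m₂.1 * m₂.2) by ring]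
        push_cast
        rw [one_mul, zpow_neg]
        exact mul_inv_cancel₀ (zpow_ne_zero _ hq0)
      rw [h1, one_smul]
    rw [hCeq]
    exact Submodule.smul_mem _ _ (Submodule.subset_span hz)

end QTorus
end
end

section
/- Let V be a nontrivial irreducible generalized highest weight ℤ-graded L-module whose generalized highest weight vector corresponds to the ℤ-basis {b1, b2} of ℤ². Then for every v ∈ V there exists p ∈ ℕ such that t_0^{i} t^{a b1 + b b2}·v = 0 for all integers a, b ≥ p and all i ∈ ℤ/2ℤ. -/
open scoped BigOperators

noncomputable section

namespace QTorus

variable {q : ℂ} {L : Type} [LieRing L] [LieAlgebra ℂ L]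

variable {D : LData q L} {m₁ m₂ : ℤ × ℤ} {V : Type} [AddCommGroup V] [Module ℂ V]
  [LieRingModule L V] [LieModule ℂ L V]

-- Even-case highest/lowest weight realizations
/-- `G` realizes `M^+(ψ, m₁, m₂)` with highest degree `d₀` (for `m₂.1` even; the linear
function `ψ` on `L₀` is recorded by its values `ψt i k = ψ(t_0^i t^{k m₂})`, `ψ1 = ψ(c1)`,
`ψ2 = ψ(c2)`). -/
def GradedRep.IsMplusEvenAt (G : GradedRep D m₁ m₂ V) (ψt : ZMod 2 → ℤ → ℂ) (ψ1 ψ2 : ℂ)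
    (d₀ : ℤ) : Prop :=
  G.IsIrreducible ∧ (∀ k : ℤ, d₀ < k → G.comp k = ⊥) ∧
    ∃ v : V, v ≠ 0 ∧ v ∈ G.comp d₀ ∧ G.comp d₀ = Submodule.span ℂ {v} ∧
      (∀ j : ℤ, 0 < j → ∀ x ∈ Lj D m₁ m₂ j, ⁅x, v⁆ = 0) ∧
      (∀ (i : ZMod 2) (k : ℤ), ⁅D.t i (k • m₂), v⁆ = ψt i k • v) ∧
      ⁅D.c1, v⁆ = ψ1 • v ∧ ⁅D.c2, v⁆ = ψ2 • v

def GradedRep.IsMplusEven (G : GradedRep D m₁ m₂ V) (ψt : ZMod 2 → ℤ → ℂ) (ψ1 ψ2 : ℂ) : Prop :=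
  ∃ d₀ : ℤ, G.IsMplusEvenAt ψt ψ1 ψ2 d₀

def GradedRep.IsMminusEvenAt (G : GradedRep D m₁ m₂ V) (ψt : ZMod 2 → ℤ → ℂ) (ψ1 ψ2 : ℂ)
    (d₀ : ℤ) : Prop :=
  G.IsIrreducible ∧ (∀ k : ℤ, k < d₀ → G.comp k = ⊥) ∧
    ∃ v : V, v ≠ 0 ∧ v ∈ G.comp d₀ ∧ G.comp d₀ = Submodule.span ℂ {v} ∧
      (∀ j : ℤ, j < 0 → ∀ x ∈ Lj D m₁ m₂ j, ⁅x, v⁆ = 0) ∧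
      (∀ (i : ZMod 2) (k : ℤ), ⁅D.t i (k • m₂), v⁆ = ψt i k • v) ∧
      ⁅D.c1, v⁆ = ψ1 • v ∧ ⁅D.c2, v⁆ = ψ2 • v

def GradedRep.IsMminusEven (G : GradedRep D m₁ m₂ V) (ψt : ZMod 2 → ℤ → ℂ) (ψ1 ψ2 : ℂ) : Prop :=
  ∃ d₀ : ℤ, G.IsMminusEvenAt ψt ψ1 ψ2 d₀

/-- An exp-polynomial linear function on `L₀` (case `m₂.1` even). -/
def ExpPolyEven (q : ℂ) (m₁ m₂ : ℤ × ℤ) (ψt : ZMod 2 → ℤ → ℂ) (ψ1 ψ2 : ℂ) : Prop :=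
  ∃ (r : ℕ) (sdeg : Fin r → ℕ) (b : Fin r → ℕ → ZMod 2 → ℂ) (A : Fin r → ℂ),
    1 ≤ r ∧ (∀ k, A k ≠ 0) ∧
    (∀ i : ℤ, i ≠ 0 → ∀ j : ZMod 2,
      ψt j i =
        (∑ k, (∑ l ∈ Finset.range (sdeg k + 1), b k l j * (i : ℂ) ^ l) * A k ^ i) /
          ((1 - sgn 1 j * q ^ (i * (m₁.1 * m₂.2 - m₁.2 * m₂.1))) *
            q ^ (i ^ 2 * (m₂.1 / 2) * m₂.2))) ∧
    ((m₁.1 : ℂ) * ψ1 + (m₁.2 : ℂ) * ψ2 = ∑ k, b k 0 0) ∧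
    (ψt 1 0 = (1 / 2) * ∑ k, b k 0 1)

-- sl2 representations and tensor products
/-- An `sl₂(ℂ)`-module structure on `W`: operators `e, f, h` satisfying the `sl₂` relations. -/
structure Sl2Rep (W : Type) [AddCommGroup W] [Module ℂ W] where
  e : Module.End ℂ W
  f : Module.End ℂ W
  h : Module.End ℂ W
  rel_he : h * e - e * h = (2 : ℂ) • e
  rel_hf : h * f - f * h = -((2 : ℂ) • f)
  rel_ef : e * f - f * e = h

/-- Irreducibility of an `sl₂(ℂ)`-module. -/
def Sl2Rep.Irreducible {W : Type} [AddCommGroup W] [Module ℂ W] (ρ : Sl2Rep W) : Prop :=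
  (∃ w : W, w ≠ 0) ∧ ∀ U : Submodule ℂ W,
    (∀ w ∈ U, ρ.e w ∈ U ∧ ρ.f w ∈ U ∧ ρ.h w ∈ U) → U = ⊥ ∨ U = ⊤

/-- The tensor product `V_1 ⊗ ⋯ ⊗ V_ν` with `V_i = ℂ^{d i}`. -/
abbrev Tens {ν : ℕ} (d : Fin ν → ℕ) : Type := PiTensorProduct ℂ (fun i => Fin (d i) → ℂ)

/-- The operator `id ⊗ ⋯ ⊗ φ ⊗ ⋯ ⊗ id` acting in the `i`-th tensor factor. -/
def inFactor {ν : ℕ} (d : Fin ν → ℕ) (i : Fin ν)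
    (φ : (Fin (d i) → ℂ) →ₗ[ℂ] (Fin (d i) → ℂ)) : Tens d →ₗ[ℂ] Tens d :=
  PiTensorProduct.map (Function.update (fun j => LinearMap.id) i φ)

/-- Action of `t_0^1 t^{2j m₂}` on `V(μ, ψ)`. -/
def hAct (q : ℂ) (m₂ : ℤ × ℤ) {ν : ℕ} (μ : Fin ν → ℂ) (d : Fin ν → ℕ)
    (ρ : ∀ i, Sl2Rep (Fin (d i) → ℂ)) (j : ℤ) : Tens d →ₗ[ℂ] Tens d :=
  (-(q ^ (-(2 * j ^ 2 * m₂.2 * m₂.1)))) • ∑ i : Fin ν, μ i ^ j • inFactor d i (ρ i).h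

/-- Action of `t_0^k t^{(2j+1) m₂}` on `V(μ, ψ)`; here `s` is a square root of `q`, so that
`s^{-(2j+1)² m22 m21} = q^{-(1/2)(2j+1)² m22 m21}`. -/
def oddAct (s : ℂ) (m₂ : ℤ × ℤ) {ν : ℕ} (μ : Fin ν → ℂ) (d : Fin ν → ℕ)
    (ρ : ∀ i, Sl2Rep (Fin (d i) → ℂ)) (k : ZMod 2) (j : ℤ) : Tens d →ₗ[ℂ] Tens d :=
  s ^ (-((2 * j + 1) ^ 2 * m₂.2 * m₂.1)) •
    (sgn 1 k • ∑ i : Fin ν, μ i ^ j • inFactor d i (ρ i).e +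
      ∑ i : Fin ν, μ i ^ (j + 1) • inFactor d i (ρ i).f)

/-- `G` realizes `M^+(μ, ψ, m₁, m₂)` with highest degree `d₀` (case `m₂.1` odd): the top
homogeneous component is a copy of `V(μ, ψ) = V_1 ⊗ ⋯ ⊗ V_ν` with its `L₀`-action,
killed by `L_+`, and `G` is irreducible ℤ-graded.  The linear function `ψ` is recorded via
`ψA j = ψ(t_0^0 t^{2j m₂})`, `ψβ = ψ(β)` and `ψc = ψ(m21 c1 + m22 c2)`. -/
def GradedRep.IsMplusOddAt (G : GradedRep D m₁ m₂ V) (s : ℂ) {ν : ℕ} (μ : Fin ν → ℂ)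
    (d : Fin ν → ℕ) (ρ : ∀ i, Sl2Rep (Fin (d i) → ℂ)) (ψA : ℤ → ℂ) (ψβ ψc : ℂ)
    (d₀ : ℤ) : Prop :=
  G.IsIrreducible ∧ (∀ k : ℤ, d₀ < k → G.comp k = ⊥) ∧
    ∃ ι : Tens d →ₗ[ℂ] V, Function.Injective ι ∧ LinearMap.range ι = G.comp d₀ ∧
      (∀ j : ℤ, 0 < j → ∀ x ∈ Lj D m₁ m₂ j, ∀ w : Tens d, ⁅x, ι w⁆ = 0) ∧
      (∀ (j : ℤ) (w : Tens d), ⁅D.t 0 ((2 * j) • m₂), ι w⁆ = ψA j • ι w) ∧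
      (∀ (j : ℤ) (w : Tens d), ⁅D.t 1 ((2 * j) • m₂), ι w⁆ = ι (hAct q m₂ μ d ρ j w)) ∧
      (∀ (k : ZMod 2) (j : ℤ) (w : Tens d),
        ⁅D.t k ((2 * j + 1) • m₂), ι w⁆ = ι (oddAct s m₂ μ d ρ k j w)) ∧
      (∀ w : Tens d, ⁅(m₂.1 : ℂ) • D.c1 + (m₂.2 : ℂ) • D.c2, ι w⁆ = ψc • ι w) ∧
      (∀ w : Tens d, ⁅(m₁.1 : ℂ) • D.c1 + (m₁.2 : ℂ) • D.c2, ι w⁆ = ψβ • ι w)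

def GradedRep.IsMplusOdd (G : GradedRep D m₁ m₂ V) (s : ℂ) {ν : ℕ} (μ : Fin ν → ℂ)
    (d : Fin ν → ℕ) (ρ : ∀ i, Sl2Rep (Fin (d i) → ℂ)) (ψA : ℤ → ℂ) (ψβ ψc : ℂ) : Prop :=
  ∃ d₀ : ℤ, G.IsMplusOddAt s μ d ρ ψA ψβ ψc d₀

def GradedRep.IsMminusOddAt (G : GradedRep D m₁ m₂ V) (s : ℂ) {ν : ℕ} (μ : Fin ν → ℂ)
    (d : Fin ν → ℕ) (ρ : ∀ i, Sl2Rep (Fin (d i) → ℂ)) (ψA : ℤ → ℂ) (ψβ ψc : ℂ)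
    (d₀ : ℤ) : Prop :=
  G.IsIrreducible ∧ (∀ k : ℤ, k < d₀ → G.comp k = ⊥) ∧
    ∃ ι : Tens d →ₗ[ℂ] V, Function.Injective ι ∧ LinearMap.range ι = G.comp d₀ ∧
      (∀ j : ℤ, j < 0 → ∀ x ∈ Lj D m₁ m₂ j, ∀ w : Tens d, ⁅x, ι w⁆ = 0) ∧
      (∀ (j : ℤ) (w : Tens d), ⁅D.t 0 ((2 * j) • m₂), ι w⁆ = ψA j • ι w) ∧
      (∀ (j : ℤ) (w : Tens d), ⁅D.t 1 ((2 * j) • m₂), ι w⁆ = ι (hAct q m₂ μ d ρ j w)) ∧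
      (∀ (k : ZMod 2) (j : ℤ) (w : Tens d),
        ⁅D.t k ((2 * j + 1) • m₂), ι w⁆ = ι (oddAct s m₂ μ d ρ k j w)) ∧
      (∀ w : Tens d, ⁅(m₂.1 : ℂ) • D.c1 + (m₂.2 : ℂ) • D.c2, ι w⁆ = ψc • ι w) ∧
      (∀ w : Tens d, ⁅(m₁.1 : ℂ) • D.c1 + (m₁.2 : ℂ) • D.c2, ι w⁆ = ψβ • ι w)

def GradedRep.IsMminusOdd (G : GradedRep D m₁ m₂ V) (s : ℂ) {ν : ℕ} (μ : Fin ν → ℂ)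
    (d : Fin ν → ℕ) (ρ : ∀ i, Sl2Rep (Fin (d i) → ℂ)) (ψA : ℤ → ℂ) (ψβ ψc : ℂ) : Prop :=
  ∃ d₀ : ℤ, G.IsMminusOddAt s μ d ρ ψA ψβ ψc d₀

/-- An exp-polynomial linear function on `𝒜 ⊕ ℂβ` (case `m₂.1` odd). -/
def ExpPolyOdd (q : ℂ) (m₁ m₂ : ℤ × ℤ) (ψA : ℤ → ℂ) (ψβ : ℂ) : Prop :=
  ∃ (r : ℕ) (sdeg : Fin r → ℕ) (b : Fin r → ℕ → ℂ) (A : Fin r → ℂ),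
    1 ≤ r ∧ (∀ k, A k ≠ 0) ∧
    (∀ i : ℤ, i ≠ 0 →
      ψA i = (∑ k, (∑ l ∈ Finset.range (sdeg k + 1), b k l * (i : ℂ) ^ l) * A k ^ i) /
        ((1 - q ^ (2 * i * (m₁.1 * m₂.2 - m₁.2 * m₂.1))) * q ^ (2 * i ^ 2 * m₂.1 * m₂.2))) ∧
    ψβ = ∑ k, b k 0


lemma exists_coords {b1 b2 : ℤ × ℤ} (hb : IsZBasis b1 b2) (n : ℤ × ℤ) :
    ∃ x y : ℤ, n = x • b1 + y • b2 := by
  rcases hb with h | h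
  · refine ⟨n.1 * b2.2 - n.2 * b2.1, b1.1 * n.2 - b1.2 * n.1, ?_⟩
    ext
    · simp only [Prod.fst_add, Prod.smul_fst, smul_eq_mul]; linear_combination (-n.1) * h
    · simp only [Prod.snd_add, Prod.smul_snd, smul_eq_mul]; linear_combination (-n.2) * h
  · refine ⟨-(n.1 * b2.2 - n.2 * b2.1), -(b1.1 * n.2 - b1.2 * n.1), ?_⟩
    ext
    · simp only [Prod.fst_add, Prod.smul_fst, smul_eq_mul]; linear_combination n.1 * h
    · simp only [Prod.snd_add, Prod.smul_snd, smul_eq_mul]; linear_combination n.2 * h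

lemma comb_ne_zero {b1 b2 : ℤ × ℤ} (hb : IsZBasis b1 b2) {x y : ℤ} (hx : x ≠ 0) :
    x • b1 + y • b2 ≠ (0 : ℤ × ℤ) := by
  intro h
  rw [Prod.ext_iff] at h
  simp only [Prod.fst_add, Prod.snd_add, Prod.smul_fst, Prod.smul_snd, smul_eq_mul,
    Prod.fst_zero, Prod.snd_zero] at h
  obtain ⟨h1, h2⟩ := h
  have hdet : x * (b1.1 * b2.2 - b1.2 * b2.1) = 0 := by linear_combination b2.2 * h1 - b2.1 * h2
  rcases hb with h | h <;> rw [h] at hdet <;> omega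

/-- The submodule of eventually-annihilated vectors. -/
def annSub {q : ℂ} {L : Type} [LieRing L] [LieAlgebra ℂ L] (D : LData q L)
    (b1 b2 : ℤ × ℤ) (V : Type) [AddCommGroup V] [Module ℂ V] [LieRingModule L V]
    [LieModule ℂ L V] : Submodule ℂ V where
  carrier := {w | ∃ p : ℕ, ∀ a b : ℤ, (p : ℤ) ≤ a → (p : ℤ) ≤ b →
    ∀ i : ZMod 2, ⁅D.t i (a • b1 + b • b2), w⁆ = 0}
  zero_mem' := ⟨0, fun _ _ _ _ _ => lie_zero _⟩
  add_mem' := by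
    rintro x y ⟨p, hp⟩ ⟨r, hr⟩
    refine ⟨max p r, fun a b ha hb i => ?_⟩
    have hpa : (p : ℤ) ≤ a := by omega
    have hpb : (p : ℤ) ≤ b := by omega
    have hra : (r : ℤ) ≤ a := by omega
    have hrb : (r : ℤ) ≤ b := by omega
    rw [lie_add, hp a b hpa hpb i, hr a b hra hrb i, add_zero]
  smul_mem' := by
    rintro c x ⟨p, hp⟩
    exact ⟨p, fun a b ha hb i => by rw [lie_smul, hp a b ha hb i, smul_zero]⟩

lemma annSub_lie {q : ℂ} {L : Type} [LieRing L] [LieAlgebra ℂ L] (D : LData q L)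
    {b1 b2 : ℤ × ℤ} (hZb : IsZBasis b1 b2)
    {V : Type} [AddCommGroup V] [Module ℂ V] [LieRingModule L V] [LieModule ℂ L V]
    (x : L) (w : V) (hw : w ∈ annSub D b1 b2 V) : ⁅x, w⁆ ∈ annSub D b1 b2 V := by
  obtain ⟨p, hp⟩ := hw
  let Φ : L →ₗ[ℂ] V :=
    { toFun := fun y => ⁅y, w⁆
      map_add' := fun a b => add_lie a b w
      map_smul' := fun c a => smul_lie c a w }
  suffices h : (⊤ : Submodule ℂ L) ≤ Submodule.comap Φ (annSub D b1 b2 V) from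
    h Submodule.mem_top
  rw [← D.span_eq]
  refine Submodule.span_le.mpr ?_
  rintro y (⟨⟨j, n⟩, rfl⟩ | hy)
  · -- y = t j n
    obtain ⟨x1, x2, hn⟩ := exists_coords hZb n
    refine ⟨p + 1 + x1.natAbs + x2.natAbs, fun a b ha hb i => ?_⟩
    have hw0 : ⁅D.t i (a • b1 + b • b2), w⁆ = 0 := hp a b (by omega) (by omega) i
    show ⁅D.t i (a • b1 + b • b2), ⁅D.t j n, w⁆⁆ = 0
    rw [leibniz_lie, hw0, lie_zero, add_zero, D.bracket_tt]
    have hpair : ((a • b1 + b • b2).1 + n.1, (a • b1 + b • b2).2 + n.2)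
        = (a + x1) • b1 + (b + x2) • b2 := by
      rw [hn]
      simp only [Prod.fst_add, Prod.snd_add, Prod.smul_fst, Prod.smul_snd, smul_eq_mul,
        Prod.mk.injEq, Prod.ext_iff]
      constructor <;> ring
    have hcond : ¬(i + j = 0 ∧ (a • b1 + b • b2) + n = 0) := by
      rintro ⟨-, h0⟩
      have h0' : (a + x1) • b1 + (b + x2) • b2 = (0 : ℤ × ℤ) := by
        rw [← h0, hn]; module
      exact comb_ne_zero hZb (by omega : a + x1 ≠ 0) h0'
    rw [if_neg hcond, zero_smul, add_zero, smul_lie, hpair,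
      hp (a + x1) (b + x2) (by omega) (by omega) (i + j), smul_zero]
  · -- y ∈ {c1, c2}
    have key : ∀ c : L, (∀ z : L, ⁅c, z⁆ = 0) → Φ c ∈ annSub D b1 b2 V := by
      intro c hc
      refine ⟨p, fun a b ha hb i => ?_⟩
      show ⁅D.t i (a • b1 + b • b2), ⁅c, w⁆⁆ = 0
      have h1 : ⁅D.t i (a • b1 + b • b2), c⁆ = 0 := by
        rw [← lie_skew, hc, neg_zero]
      rw [leibniz_lie, hp a b ha hb i, lie_zero, add_zero, h1, zero_lie]
    rcases hy with rfl | rfl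
    · exact key _ D.c1_central
    · exact key _ D.c2_central

/-- in a nontrivial irreducible generalized highest weight ℤ-graded
`L`-module corresponding to the ℤ-basis `{b1, b2}`, every vector is annihilated by all
`t_0^i t^{a b1 + b b2}` with `a, b` large enough. -/
theorem GHW_eventually_annihilates (q : ℂ) (hq : Generic q)
    {L : Type} [LieRing L] [LieAlgebra ℂ L] (D : LData q L)
    (m₁ m₂ : ℤ × ℤ) (hb : IsZBasis m₁ m₂)
    {V : Type} [AddCommGroup V] [Module ℂ V] [LieRingModule L V] [LieModule ℂ L V]
    (G : GradedRep D m₁ m₂ V) (hirr : G.IsIrreducible)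
    (hnt : ∃ (x : L) (w : V), ⁅x, w⁆ ≠ 0)
    (b1 b2 : ℤ × ℤ) (hghw : G.IsGHWFor b1 b2) :
    ∀ w : V, ∃ p : ℕ, ∀ a b : ℤ, (p : ℤ) ≤ a → (p : ℤ) ≤ b →
      ∀ i : ZMod 2, ⁅D.t i (a • b1 + b • b2), w⁆ = 0 := by
  obtain ⟨hZb, dg, v, hvmem, hvne, hspan, hkill⟩ := hghw
  let N : LieSubmodule ℂ L V :=
    { annSub D b1 b2 V with
      lie_mem := fun {x w} hw => annSub_lie D hZb x w hw }
  have hvN : v ∈ N := by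
    refine ⟨0, fun a b ha hb i => ?_⟩
    lift a to ℕ using (by exact_mod_cast ha)
    lift b to ℕ using (by exact_mod_cast hb)
    exact hkill a b i
  have hle : LieSubmodule.lieSpan ℂ L {v} ≤ N :=
    (LieSubmodule.lieSpan_le).mpr (by simpa using hvN)
  rw [hspan] at hle
  intro w
  exact hle (LieSubmodule.mem_top w)

end QTorus
end
end

section
/- Let V be a nontrivial irreducible generalized highest weight ℤ-graded L-module whose generalized highest weight vector corresponds to the ℤ-basis {b1, b2} of ℤ². Then for every nonzero v ∈ V, all positive integers a, b, and every i ∈ ℤ/2ℤ, one has t_0^{i} t^{−a b1 − b b2}·v ≠ 0. -/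
open scoped BigOperators

noncomputable section

namespace QTorus

variable {q : ℂ} {L : Type} [LieRing L] [LieAlgebra ℂ L]

variable {D : LData q L} {m₁ m₂ : ℤ × ℤ} {V : Type} [AddCommGroup V] [Module ℂ V]
  [LieRingModule L V] [LieModule ℂ L V]

section Aux

variable {q : ℂ} {L : Type} [LieRing L] [LieAlgebra ℂ L] {D : LData q L}
  {V : Type} [AddCommGroup V] [Module ℂ V] [LieRingModule L V] [LieModule ℂ L V]

lemma sgn_mul_self (a : ℤ) (i : ZMod 2) : sgn a i * sgn a i = 1 := by
  unfold sgn
  split_ifs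
  · ring
  · rw [← mul_zpow]; norm_num

lemma coeff_ne_zero (hq : Generic q) {s1 s2 : ℂ} (h1 : s1 * s1 = 1) (h2 : s2 * s2 = 1)
    {α β : ℤ} (hne : α ≠ β) : s1 * q ^ α - s2 * q ^ β ≠ 0 := by
  intro h
  have hqz := hq.1
  have he : s1 * q ^ α = s2 * q ^ β := sub_eq_zero.mp h
  have h2' : (s1 * q ^ α) * (s1 * q ^ α) = (s2 * q ^ β) * (s2 * q ^ β) := by rw [he]
  have h3 : q ^ (α + α) = q ^ (β + β) := by
    rw [zpow_add₀ hqz, zpow_add₀ hqz]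
    calc q ^ α * q ^ α = (s1 * s1) * (q ^ α * q ^ α) := by rw [h1, one_mul]
      _ = (s1 * q ^ α) * (s1 * q ^ α) := by ring
      _ = (s2 * q ^ β) * (s2 * q ^ β) := h2'
      _ = (s2 * s2) * (q ^ β * q ^ β) := by ring
      _ = q ^ β * q ^ β := by rw [h2, one_mul]
  have h4 : q ^ (α + α - (β + β)) = 1 := by
    rw [zpow_sub₀ hqz, h3, div_self (zpow_ne_zero _ hqz)]
  exact hq.2 _ (by omega) h4

lemma vec_fst (B C : ℤ × ℤ) (r s : ℤ) : (r • B + s • C).1 = r * B.1 + s * C.1 := rfl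

lemma vec_snd (B C : ℤ × ℤ) (r s : ℤ) : (r • B + s • C).2 = r * B.2 + s * C.2 := rfl

lemma vec_add (B C : ℤ × ℤ) (r s r' s' : ℤ) :
    (r • B + s • C) + (r' • B + s' • C) = (r + r') • B + (s + s') • C := by
  rw [add_smul, add_smul]; abel

lemma pair_add_eq (B C : ℤ × ℤ) (r s r' s' : ℤ) :
    ((r • B + s • C).1 + (r' • B + s' • C).1, (r • B + s • C).2 + (r' • B + s' • C).2)
      = (r + r') • B + (s + s') • C := by
  rw [← vec_add]; rfl

lemma exists_coords_s12 {B C : ℤ × ℤ} (hb : IsZBasis B C) (n : ℤ × ℤ) :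
    ∃ r s : ℤ, n = r • B + s • C := by
  rcases hb with hd | hd
  · refine ⟨n.1 * C.2 - n.2 * C.1, B.1 * n.2 - B.2 * n.1, Prod.ext ?_ ?_⟩
    · rw [vec_fst]; linear_combination (-n.1) * hd
    · rw [vec_snd]; linear_combination (-n.2) * hd
  · refine ⟨-(n.1 * C.2 - n.2 * C.1), -(B.1 * n.2 - B.2 * n.1), Prod.ext ?_ ?_⟩
    · rw [vec_fst]; linear_combination n.1 * hd
    · rw [vec_snd]; linear_combination n.2 * hd

lemma coords_eq_zero {B C : ℤ × ℤ} (hb : IsZBasis B C) {r s : ℤ}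
    (h : r • B + s • C = 0) : r = 0 ∧ s = 0 := by
  have h1 : r * B.1 + s * C.1 = 0 := by rw [← vec_fst B C r s, h]; rfl
  have h2 : r * B.2 + s * C.2 = 0 := by rw [← vec_snd B C r s, h]; rfl
  have hr : r * (B.1 * C.2 - B.2 * C.1) = 0 := by linear_combination C.2 * h1 - C.1 * h2
  have hs : s * (B.1 * C.2 - B.2 * C.1) = 0 := by linear_combination B.1 * h2 - B.2 * h1
  rcases hb with hd | hd <;> rw [hd] at hr hs <;> omega

lemma det_coords (B C : ℤ × ℤ) (r s r' s' : ℤ) :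
    (r • B + s • C).1 * (r' • B + s' • C).2 - (r • B + s • C).2 * (r' • B + s' • C).1
      = (r * s' - s * r') * (B.1 * C.2 - B.2 * C.1) := by
  rw [vec_fst, vec_snd, vec_fst, vec_snd]; ring

lemma det_ne {B C : ℤ × ℤ} (hb : IsZBasis B C) {r s r' s' : ℤ} (h : r * s' ≠ s * r') :
    (r • B + s • C).1 * (r' • B + s' • C).2 ≠ (r • B + s • C).2 * (r' • B + s' • C).1 := by
  intro heq
  have h0 : (r * s' - s * r') * (B.1 * C.2 - B.2 * C.1) = 0 := by
    rw [← det_coords B C r s r' s', heq, sub_self]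
  rcases hb with hd | hd <;> rw [hd] at h0 <;> omega

lemma step (hq : Generic q) {u : V} (i j : ZMod 2) {X Y : ℤ × ℤ}
    (hdet : X.1 * Y.2 ≠ X.2 * Y.1)
    (hX : ⁅D.t i X, u⁆ = 0) (hY : ⁅D.t j Y, u⁆ = 0) :
    ⁅D.t (i + j) (X.1 + Y.1, X.2 + Y.2), u⁆ = 0 := by
  have hXY : ¬(i + j = 0 ∧ X + Y = 0) := by
    rintro ⟨-, h⟩
    have hY' : Y = -X := eq_neg_of_add_eq_zero_right h
    apply hdet
    rw [hY', Prod.fst_neg, Prod.snd_neg]; ring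
  have h0 : ⁅(⁅D.t i X, D.t j Y⁆ : L), u⁆ = 0 := by
    have hl := leibniz_lie (D.t i X) (D.t j Y) u
    rw [hX, hY, lie_zero, lie_zero, add_zero] at hl
    exact hl.symm
  rw [D.bracket_tt, if_neg hXY, zero_smul, add_zero, smul_lie] at h0
  have hc := coeff_ne_zero hq (sgn_mul_self X.1 j) (sgn_mul_self Y.1 i)
    (show X.2 * Y.1 ≠ X.1 * Y.2 from fun hh => hdet hh.symm)
  exact (smul_eq_zero.mp h0).resolve_left hc

lemma lie_finset_sum {ι : Type*} (s : Finset ι) (y : L) (f : ι → V) :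
    ⁅y, ∑ k ∈ s, f k⁆ = ∑ k ∈ s, ⁅y, f k⁆ := by
  classical
  induction s using Finset.induction with
  | empty => simp
  | insert _ _ hk ih => rw [Finset.sum_insert hk, Finset.sum_insert hk, lie_add, ih]

lemma solve2 {W : Type*} [AddCommGroup W] [Module ℂ W] {α1 α2 β1 β2 : ℂ} {C1 C2 : W}
    (h1 : α1 • C1 + α2 • C2 = 0) (h2 : β1 • C1 + β2 • C2 = 0) (hd : α1 * β2 - α2 * β1 ≠ 0) :
    C1 = 0 ∧ C2 = 0 := by
  have e1 : (α1 * β2 - α2 * β1) • C1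
      = β2 • (α1 • C1 + α2 • C2) - α2 • (β1 • C1 + β2 • C2) := by module
  have e2 : (α1 * β2 - α2 * β1) • C2
      = α1 • (β1 • C1 + β2 • C2) - β1 • (α1 • C1 + α2 • C2) := by module
  rw [h1, h2, smul_zero, smul_zero, sub_zero] at e1 e2
  exact ⟨(smul_eq_zero.mp e1).resolve_left hd, (smul_eq_zero.mp e2).resolve_left hd⟩

lemma pair_neg_zero (X : ℤ × ℤ) : ((X.1 + (-X).1 : ℤ), (X.2 + (-X).2 : ℤ)) = ((0 : ℤ), (0 : ℤ)) := by
  simp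

lemma central_rel (hq : Generic q) {w : V} {X : ℤ × ℤ}
    (hX : ∀ j, ⁅D.t j X, w⁆ = 0) (hXn : ∀ j, ⁅D.t j (-X), w⁆ = 0) :
    (X.1 : ℂ) • ⁅D.c1, w⁆ + (X.2 : ℂ) • ⁅D.c2, w⁆ = 0 := by
  have h0 : ⁅(⁅D.t 0 X, D.t 0 (-X)⁆ : L), w⁆ = 0 := by
    have hl := leibniz_lie (D.t 0 X) (D.t 0 (-X)) w
    rw [hX, hXn, lie_zero, lie_zero, add_zero] at hl
    exact hl.symm
  rw [D.bracket_tt, pair_neg_zero, show ((0 : ZMod 2) + 0) = 0 from rfl, D.t00, smul_zero,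
    zero_add, if_pos ⟨rfl, add_neg_cancel X⟩, smul_lie] at h0
  have hc : sgn X.1 0 * q ^ (X.2 * (-X).1) ≠ 0 := by
    have : sgn X.1 0 = 1 := by simp [sgn]
    rw [this, one_mul]
    exact zpow_ne_zero _ hq.1
  have h1 := (smul_eq_zero.mp h0).resolve_left hc
  rw [add_lie, smul_lie, smul_lie] at h1
  exact h1

lemma t_one_zero (hq : Generic q) {w : V} {X : ℤ × ℤ} (hodd : Odd X.1)
    (hX : ∀ j, ⁅D.t j X, w⁆ = 0) (hXn : ∀ j, ⁅D.t j (-X), w⁆ = 0) :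
    ⁅D.t 1 ((0, 0) : ℤ × ℤ), w⁆ = 0 := by
  have h0 : ⁅(⁅D.t 0 X, D.t 1 (-X)⁆ : L), w⁆ = 0 := by
    have hl := leibniz_lie (D.t 0 X) (D.t 1 (-X)) w
    rw [hX, hXn, lie_zero, lie_zero, add_zero] at hl
    exact hl.symm
  have hne : ¬((0 : ZMod 2) + 1 = 0 ∧ X + -X = 0) := by
    rintro ⟨h, -⟩; revert h; decide
  rw [D.bracket_tt, pair_neg_zero, if_neg hne, zero_smul, add_zero, smul_lie] at h0
  have hcoef : sgn X.1 1 * q ^ (X.2 * (-X).1) - sgn (-X).1 0 * q ^ (X.1 * (-X).2)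
      = (-2) * q ^ (X.2 * (-X).1) := by
    have h1 : sgn X.1 1 = -1 := by
      simp only [sgn, if_neg (by decide : (1 : ZMod 2) ≠ 0)]
      exact hodd.neg_one_zpow
    have h2 : sgn (-X).1 0 = 1 := by simp [sgn]
    have h3 : X.1 * (-X).2 = X.2 * (-X).1 := by
      rw [Prod.fst_neg, Prod.snd_neg]; ring
    rw [h1, h2, h3]; ring
  rw [hcoef] at h0
  have hc : (-2 : ℂ) * q ^ (X.2 * (-X).1) ≠ 0 :=
    mul_ne_zero (by norm_num) (zpow_ne_zero _ hq.1)
  have := (smul_eq_zero.mp h0).resolve_left hc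
  rwa [show (0 : ZMod 2) + 1 = 1 from by decide] at this

lemma deep_ann {b1 b2 : ℤ × ℤ} (hb : IsZBasis b1 b2) {v : V}
    (hspan : LieSubmodule.lieSpan ℂ L {v} = ⊤)
    (hkill : ∀ (a b : ℕ) (i : ZMod 2), ⁅D.t i ((a : ℤ) • b1 + (b : ℤ) • b2), v⁆ = 0)
    (u : V) : ∃ p : ℤ, 0 ≤ p ∧ ∀ r s : ℤ, p ≤ r → p ≤ s → ∀ j : ZMod 2,
      ⁅D.t j (r • b1 + s • b2), u⁆ = 0 := by
  let S0 : Submodule ℂ V :=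
    { carrier := {u | ∃ p : ℤ, 0 ≤ p ∧ ∀ r s : ℤ, p ≤ r → p ≤ s → ∀ j : ZMod 2,
        ⁅D.t j (r • b1 + s • b2), u⁆ = 0}
      add_mem' := by
        rintro x y ⟨p, hp0, hp⟩ ⟨p', hp0', hp'⟩
        exact ⟨max p p', le_trans hp0 (le_max_left _ _), fun r s hr hs j => by
          rw [lie_add, hp r s (le_trans (le_max_left _ _) hr) (le_trans (le_max_left _ _) hs) j,
            hp' r s (le_trans (le_max_right _ _) hr) (le_trans (le_max_right _ _) hs) j,
            add_zero]⟩
      zero_mem' := ⟨0, le_refl _, fun _ _ _ _ _ => lie_zero _⟩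
      smul_mem' := by
        rintro c x ⟨p, hp0, hp⟩
        exact ⟨p, hp0, fun r s hr hs j => by rw [lie_smul, hp r s hr hs j, smul_zero]⟩ }
  have key : ∀ x : L, ∀ u ∈ S0, ⁅x, u⁆ ∈ S0 := by
    intro x u hu
    have hx : x ∈ Submodule.span ℂ
        ((Set.range fun p : ZMod 2 × (ℤ × ℤ) => D.t p.1 p.2) ∪ {D.c1, D.c2}) := by
      rw [D.span_eq]; exact Submodule.mem_top
    induction hx using Submodule.span_induction with
    | mem y hy =>
      rcases hy with ⟨⟨jj, n⟩, rfl⟩ | hy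
      · obtain ⟨α, β, rfl⟩ := exists_coords_s12 hb n
        obtain ⟨p, hp0, hp⟩ := hu
        have ha1 := abs_nonneg α
        have ha2 := neg_abs_le α
        have hb1 := abs_nonneg β
        have hb2 := neg_abs_le β
        refine ⟨p + |α| + |β| + 1, by omega, fun r s hr hs j => ?_⟩
        have hne : ¬(j + jj = 0 ∧ (r • b1 + s • b2) + (α • b1 + β • b2) = 0) := by
          rintro ⟨-, h⟩
          rw [vec_add] at h
          obtain ⟨h1, -⟩ := coords_eq_zero hb h
          omega
        rw [leibniz_lie, hp r s (by omega) (by omega) j, lie_zero, add_zero,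
          D.bracket_tt, if_neg hne, zero_smul, add_zero, smul_lie, pair_add_eq,
          hp (r + α) (s + β) (by omega) (by omega) (j + jj), smul_zero]
      · obtain ⟨p, hp0, hp⟩ := hu
        have hcent : ∀ z : L, y = z → (∀ x' : L, ⁅z, x'⁆ = 0) → ⁅y, u⁆ ∈ S0 := by
          rintro z rfl hz
          exact ⟨p, hp0, fun r s hr hs j => by
            rw [leibniz_lie, hp r s hr hs j, lie_zero, add_zero, ← lie_skew, hz, neg_zero,
              zero_lie]⟩
        rcases hy with rfl | hy
        · exact hcent _ rfl D.c1_central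
        · rw [Set.mem_singleton_iff] at hy
          exact hcent _ hy D.c2_central
    | zero => rw [zero_lie]; exact S0.zero_mem
    | add y z hy hz hy' hz' => rw [add_lie]; exact S0.add_mem hy' hz'
    | smul c y hy hy' => rw [smul_lie]; exact S0.smul_mem c hy'
  let S : LieSubmodule ℂ L V :=
    { S0 with lie_mem := fun {x m} hm => key x m hm }
  have hv : v ∈ S := by
    refine ⟨0, le_refl 0, fun r s hr hs j => ?_⟩
    have hrs : r • b1 + s • b2 = ((r.toNat : ℤ)) • b1 + ((s.toNat : ℤ)) • b2 := by
      rw [Int.toNat_of_nonneg hr, Int.toNat_of_nonneg hs]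
    rw [hrs]
    exact hkill r.toNat s.toNat j
  have htop : (⊤ : LieSubmodule ℂ L V) ≤ S := by
    rw [← hspan]
    exact LieSubmodule.lieSpan_le.mpr (Set.singleton_subset_iff.mpr hv)
  exact htop (LieSubmodule.mem_top u)

end Aux

open scoped DirectSum
set_option maxHeartbeats 1000000
set_option synthInstance.maxHeartbeats 400000

/-- in a nontrivial irreducible generalized highest weight ℤ-graded
`L`-module corresponding to the ℤ-basis `{b1, b2}`, the elements
`t_0^i t^{−a b1 − b b2}` (`a, b > 0`) act injectively on nonzero vectors. -/
theorem GHW_negative_cone_acts_nontrivially (q : ℂ) (hq : Generic q)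
    {L : Type} [LieRing L] [LieAlgebra ℂ L] (D : LData q L)
    (m₁ m₂ : ℤ × ℤ) (hb : IsZBasis m₁ m₂)
    {V : Type} [AddCommGroup V] [Module ℂ V] [LieRingModule L V] [LieModule ℂ L V]
    (G : GradedRep D m₁ m₂ V) (hirr : G.IsIrreducible)
    (hnt : ∃ (x : L) (w : V), ⁅x, w⁆ ≠ 0)
    (b1 b2 : ℤ × ℤ) (hghw : G.IsGHWFor b1 b2) :
    ∀ w : V, w ≠ 0 → ∀ a b : ℤ, 0 < a → 0 < b →
      ∀ i : ZMod 2, ⁅D.t i ((-a) • b1 + (-b) • b2), w⁆ ≠ 0 := by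
  classical
  obtain ⟨hbb, dg, v, hvmem, hvne, hvspan, hvkill⟩ := hghw
  intro w hw a b ha hb' i₀ hcon
  obtain ⟨p, hp0, hdeep⟩ := deep_ann hbb hvspan hvkill w
  have hzz : ∀ z : ZMod 2, z + z = 0 := by decide
  -- Step 1: annihilation in all directions non-parallel to `(a, b)`
  have main : ∀ k : ℕ, ∀ r s : ℤ, r * b ≠ s * a → p ≤ r + (k : ℤ) * a → p ≤ s + (k : ℤ) * b →
      ∀ j : ZMod 2, ⁅D.t j (r • b1 + s • b2), w⁆ = 0 := by
    intro k
    induction k with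
    | zero =>
      intro r s _ hr hs j
      exact hdeep r s (by simpa using hr) (by simpa using hs) j
    | succ k ih =>
      intro r s hrs hr hs j
      have h1 : ⁅D.t (j + i₀) ((r + a) • b1 + (s + b) • b2), w⁆ = 0 :=
        ih (r + a) (s + b) (by intro hh; apply hrs; linear_combination hh)
          (by push_cast at hr ⊢; linarith) (by push_cast at hs ⊢; linarith) (j + i₀)
      have hdet := det_ne hbb (r := r + a) (s := s + b) (r' := -a) (s' := -b)
        (by intro hh; apply hrs; linear_combination (-1 : ℤ) * hh)
      have h2 := step hq (j + i₀) i₀ hdet h1 hcon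
      rw [pair_add_eq, show r + a + -a = r from by ring, show s + b + -b = s from by ring,
        add_assoc j i₀ i₀, hzz i₀, add_zero] at h2
      exact h2
  have all_ne : ∀ r s : ℤ, r * b ≠ s * a → ∀ j : ZMod 2,
      ⁅D.t j (r • b1 + s • b2), w⁆ = 0 := by
    intro r s hrs j
    set k : ℕ := (p - r).toNat + (p - s).toNat with hk
    have hk1 : (p - r : ℤ) ≤ ((p - r).toNat : ℤ) := Int.self_le_toNat _
    have hk2 : (p - s : ℤ) ≤ ((p - s).toNat : ℤ) := Int.self_le_toNat _
    have hk3 : (0 : ℤ) ≤ ((p - r).toNat : ℤ) := Int.natCast_nonneg _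
    have hk4 : (0 : ℤ) ≤ ((p - s).toNat : ℤ) := Int.natCast_nonneg _
    have hkc : (k : ℤ) = ((p - r).toNat : ℤ) + ((p - s).toNat : ℤ) := by
      rw [hk]; push_cast; ring
    have hka : (k : ℤ) ≤ (k : ℤ) * a :=
      le_mul_of_one_le_right (Nat.cast_nonneg k) (by linarith)
    have hkb : (k : ℤ) ≤ (k : ℤ) * b :=
      le_mul_of_one_le_right (Nat.cast_nonneg k) (by linarith)
    exact main k r s hrs (by linarith) (by linarith) j
  -- Step 2: annihilation in all nonzero directions
  have all_nz : ∀ r s : ℤ, ¬(r = 0 ∧ s = 0) → ∀ j : ZMod 2,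
      ⁅D.t j (r • b1 + s • b2), w⁆ = 0 := by
    intro r s hrs0 j
    by_cases hc : r * b = s * a
    · have hs : s ≠ 0 := by
        rintro rfl
        rw [zero_mul] at hc
        rcases mul_eq_zero.mp hc with h | h
        · exact hrs0 ⟨h, rfl⟩
        · omega
      have h1 := all_ne 1 0 (by intro hh; rw [one_mul, zero_mul] at hh; omega)
      have h2 := all_ne (r - 1) s (by
        intro hh
        have h3 : -b = 0 := by linear_combination hh - hc
        omega)
      have hdet := det_ne hbb (r := 1) (s := 0) (r' := r - 1) (s' := s)
        (by intro hh; rw [one_mul, zero_mul] at hh; exact hs hh)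
      have h3 := step hq j 0 hdet (h1 j) (h2 0)
      rw [pair_add_eq, show (1 : ℤ) + (r - 1) = r from by ring,
        show (0 : ℤ) + s = s from by ring, add_zero] at h3
      exact h3
    · exact all_ne r s hc j
  -- Step 3: the central elements and `t 1 (0,0)` annihilate `w`
  have hXb1 : ∀ j : ZMod 2, ⁅D.t j b1, w⁆ = 0 := by
    intro j
    have := all_nz 1 0 (by omega) j
    rwa [one_smul, zero_smul, add_zero] at this
  have hXnb1 : ∀ j : ZMod 2, ⁅D.t j (-b1), w⁆ = 0 := by
    intro j
    have := all_nz (-1) 0 (by omega) j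
    rwa [show ((-1 : ℤ)) • b1 = -b1 from by rw [neg_smul, one_smul], zero_smul, add_zero] at this
  have hXb2 : ∀ j : ZMod 2, ⁅D.t j b2, w⁆ = 0 := by
    intro j
    have := all_nz 0 1 (by omega) j
    rwa [one_smul, zero_smul, zero_add] at this
  have hXnb2 : ∀ j : ZMod 2, ⁅D.t j (-b2), w⁆ = 0 := by
    intro j
    have := all_nz 0 (-1) (by omega) j
    rwa [show ((-1 : ℤ)) • b2 = -b2 from by rw [neg_smul, one_smul], zero_smul, zero_add] at this
  have rel1 := central_rel hq hXb1 hXnb1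
  have rel2 := central_rel hq hXb2 hXnb2
  have hdC : (b1.1 : ℂ) * (b2.2 : ℂ) - (b1.2 : ℂ) * (b2.1 : ℂ) ≠ 0 := by
    have hcast : (b1.1 : ℂ) * (b2.2 : ℂ) - (b1.2 : ℂ) * (b2.1 : ℂ)
        = ((b1.1 * b2.2 - b1.2 * b2.1 : ℤ) : ℂ) := by push_cast; ring
    have hbb' := hbb
    rcases hbb' with hd | hd <;> rw [hcast, hd] <;> norm_num
  obtain ⟨hc1, hc2⟩ := solve2 rel1 rel2 hdC
  have hodds : Odd b1.1 ∨ Odd b2.1 := by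
    rcases Int.even_or_odd b1.1 with he1 | ho1
    · rcases Int.even_or_odd b2.1 with he2 | ho2
      · exfalso
        obtain ⟨k, hk⟩ := he1
        obtain ⟨l, hl⟩ := he2
        have hdvd : (2 : ℤ) ∣ (b1.1 * b2.2 - b1.2 * b2.1) :=
          ⟨k * b2.2 - b1.2 * l, by rw [hk, hl]; ring⟩
        have hbb' := hbb
        rcases hbb' with hd | hd <;> rw [hd] at hdvd <;> omega
      · exact Or.inr ho2
    · exact Or.inl ho1
  have htone : ⁅D.t 1 ((0, 0) : ℤ × ℤ), w⁆ = 0 := by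
    rcases hodds with ho | ho
    · exact t_one_zero hq ho hXb1 hXnb1
    · exact t_one_zero hq ho hXb2 hXnb2
  -- Step 4: `w` is annihilated by all of `L`
  have hwann : ∀ y : L, ⁅y, w⁆ = 0 := by
    intro y
    have hy : y ∈ Submodule.span ℂ
        ((Set.range fun p : ZMod 2 × (ℤ × ℤ) => D.t p.1 p.2) ∪ {D.c1, D.c2}) := by
      rw [D.span_eq]; exact Submodule.mem_top
    induction hy using Submodule.span_induction with
    | mem z hz =>
      rcases hz with ⟨⟨jj, n⟩, rfl⟩ | hz
      · obtain ⟨r, s, rfl⟩ := exists_coords_s12 hbb n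
        by_cases h0 : r = 0 ∧ s = 0
        · obtain ⟨rfl, rfl⟩ := h0
          have hn : ((0 : ℤ) • b1 + (0 : ℤ) • b2) = ((0, 0) : ℤ × ℤ) := by simp; rfl
          have hjj : ∀ z : ZMod 2, z = 0 ∨ z = 1 := by decide
          rcases hjj jj with rfl | rfl
          · show ⁅D.t 0 ((0 : ℤ) • b1 + (0 : ℤ) • b2), w⁆ = 0
            rw [hn, D.t00, zero_lie]
          · show ⁅D.t 1 ((0 : ℤ) • b1 + (0 : ℤ) • b2), w⁆ = 0
            rw [hn]; exact htone
        · exact all_nz r s h0 jj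
      · rcases hz with rfl | hz
        · exact hc1
        · rw [Set.mem_singleton_iff] at hz
          rw [hz]; exact hc2
    | zero => exact zero_lie w
    | add x y hx hy hx' hy' => rw [add_lie, hx', hy', add_zero]
    | smul c x hx hx' => rw [smul_lie, hx', smul_zero]
  -- Step 5: the annihilator Lie submodule
  let N : LieSubmodule ℂ L V :=
    { carrier := {u | ∀ y : L, ⁅y, u⁆ = 0}
      add_mem' := fun {x y} hx hy z => by rw [lie_add, hx z, hy z, add_zero]
      zero_mem' := fun y => lie_zero y
      smul_mem' := fun c x hx y => by rw [lie_smul, hx y, smul_zero]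
      lie_mem := fun {x m} hm y => by rw [hm x, lie_zero] }
  have hmemN : ∀ u : V, u ∈ N ↔ ∀ y : L, ⁅y, u⁆ = 0 := fun u => Iff.rfl
  have hwN : w ∈ N := (hmemN w).mpr hwann
  -- Step 6: `N` is a graded submodule
  have hgr : G.IsGradedSub N := by
    show (N : Submodule ℂ V) = ⨆ k : ℤ, (N : Submodule ℂ V) ⊓ G.comp k
    refine le_antisymm ?_ (iSup_le fun k => inf_le_left)
    intro u hu
    have hu' : ∀ y : L, ⁅y, u⁆ = 0 := hu
    obtain ⟨du, hdu⟩ := G.internal.surjective u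
    have hu2 : u = ∑ k ∈ du.support, ((du k : V)) := by
      conv_lhs => rw [← hdu, ← DirectSum.sum_support_of (x := du)]
      rw [map_sum]
      exact Finset.sum_congr rfl fun k _ => DirectSum.coeAddMonoidHom_of _ _ _
    have hom : ∀ (α : ℤ) (y : L), y ∈ Lj D m₁ m₂ α → ⁅y, u⁆ = 0 →
        ∀ k₀ : ℤ, ⁅y, (du k₀ : V)⁆ = 0 := by
      intro α y hyL hyu k₀
      by_cases hk0 : k₀ ∈ du.support
      · set e : (⨁ k : ℤ, G.comp k) := ∑ k ∈ du.support,
          DirectSum.of (fun k => (G.comp k)) (k + α)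
            ⟨⁅y, (du k : V)⁆, G.lie_mem α k y hyL _ (du k).2⟩ with hedef
        have he : DirectSum.coeAddMonoidHom (fun k : ℤ => G.comp k) e = 0 := by
          rw [hedef, map_sum]
          have hterm : ∑ k ∈ du.support,
              (DirectSum.coeAddMonoidHom (fun k : ℤ => G.comp k)
                (DirectSum.of (fun k => (G.comp k)) (k + α)
                  ⟨⁅y, (du k : V)⁆, G.lie_mem α k y hyL _ (du k).2⟩))
              = ∑ k ∈ du.support, ⁅y, (du k : V)⁆ :=
            Finset.sum_congr rfl fun k _ => DirectSum.coeAddMonoidHom_of _ _ _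
          rw [hterm, ← lie_finset_sum, ← hu2, hyu]
        have he0 : e = 0 := G.internal.injective (by rw [he, map_zero])
        have hval : e (k₀ + α)
            = (⟨⁅y, (du k₀ : V)⁆, G.lie_mem α k₀ y hyL _ (du k₀).2⟩ : G.comp (k₀ + α)) := by
          rw [hedef, DFinsupp.finset_sum_apply]
          exact (Finset.sum_eq_single_of_mem k₀ hk0
            (fun k _ hkne => DirectSum.of_eq_of_ne _ _ _ (by omega))).trans
            (DirectSum.of_eq_same _ _)
        have hev : (⟨⁅y, (du k₀ : V)⁆, G.lie_mem α k₀ y hyL _ (du k₀).2⟩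
            : G.comp (k₀ + α)) = 0 := by
          rw [← hval, he0]; rfl
        have := congrArg Subtype.val hev
        simpa using this
      · rw [DFinsupp.notMem_support_iff.mp hk0]
        simp
    have hNk : ∀ k : ℤ, (du k : V) ∈ N := by
      intro k
      refine (hmemN _).mpr ?_
      intro y
      have hy : y ∈ Submodule.span ℂ
          ((Set.range fun p : ZMod 2 × (ℤ × ℤ) => D.t p.1 p.2) ∪ {D.c1, D.c2}) := by
        rw [D.span_eq]; exact Submodule.mem_top
      induction hy using Submodule.span_induction with
      | mem z hz =>
        rcases hz with ⟨⟨jj, n⟩, rfl⟩ | hz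
        · obtain ⟨α, β, rfl⟩ := exists_coords_s12 hb n
          refine hom α _ ?_ (hu' _) k
          exact Submodule.subset_span (Or.inl ⟨(jj, β), rfl⟩)
        · have hcmem : ∀ c' : L, c' ∈ ({D.c1, D.c2} : Set L) → ⁅c', (du k : V)⁆ = 0 := by
            intro c' hc'
            refine hom 0 c' ?_ (hu' _) k
            refine Submodule.subset_span (Or.inr ?_)
            rw [if_pos rfl]
            exact hc'
          exact hcmem _ hz
      | zero => exact zero_lie _
      | add x y hx hy hx' hy' => rw [add_lie, hx', hy', add_zero]
      | smul c x hx hx' => rw [smul_lie, hx', smul_zero]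
    have hsum : (∑ k ∈ du.support, ((du k : V))) ∈
        ⨆ k : ℤ, ((N : Submodule ℂ V) ⊓ G.comp k) := by
      refine Submodule.sum_mem _ fun k _ => Submodule.mem_iSup_of_mem k ?_
      exact Submodule.mem_inf.mpr ⟨(LieSubmodule.mem_toSubmodule _).mpr (hNk k), (du k).2⟩
    rw [hu2]
    exact hsum
  -- Step 7: conclude by irreducibility and nontriviality
  rcases hirr.2 N hgr with hbot | htopN
  · rw [hbot] at hwN
    exact hw ((LieSubmodule.mem_bot _).mp hwN)
  · obtain ⟨x, u, hxu⟩ := hnt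
    have hu : u ∈ N := by rw [htopN]; exact LieSubmodule.mem_top u
    exact hxu ((hmemN u).mp hu x)

end QTorus
end
end

section
/- Let V be a quasifinite irreducible ℤ-graded L-module which is a generalized highest weight module (for some ℤ-basis of ℤ²). Then V is a highest weight module or a lowest weight module. -/
open scoped BigOperators

noncomputable section

namespace QTorus

variable {q : ℂ} {L : Type} [LieRing L] [LieAlgebra ℂ L]

variable {D : LData q L} {m₁ m₂ : ℤ × ℤ} {V : Type} [AddCommGroup V] [Module ℂ V]
  [LieRingModule L V] [LieModule ℂ L V]

-- helpers
lemma sgn_cases (a : ℤ) (i : ZMod 2) : sgn a i = 1 ∨ sgn a i = -1 := by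
  unfold sgn
  split
  · exact Or.inl rfl
  · rcases Int.even_or_odd a with h | h
    · exact Or.inl (h.neg_one_zpow)
    · exact Or.inr (h.neg_one_zpow)

lemma coeff_ne_zero_s13 {q : ℂ} (hq : Generic q) (s s' : ℂ)
    (hs : s = 1 ∨ s = -1) (hs' : s' = 1 ∨ s' = -1) (a b : ℤ) (hab : a ≠ b) :
    s * q ^ a - s' * q ^ b ≠ 0 := by
  intro h
  have hqb : q ^ b ≠ 0 := zpow_ne_zero _ hq.1
  have h2 : s * q ^ a = s' * q ^ b := by linear_combination h
  have hab2 : a - b ≠ 0 := by omega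
  have hd : q ^ (a - b) = q ^ a / q ^ b := zpow_sub₀ hq.1 a b
  have key : q ^ (a - b) = 1 ∨ q ^ (a - b) = -1 := by
    rcases hs with h1 | h1 <;> subst h1 <;> rcases hs' with h1' | h1' <;> subst h1'
    · left; rw [hd, div_eq_iff hqb]; linear_combination h2
    · right; rw [hd, div_eq_iff hqb]; linear_combination h2
    · right; rw [hd, div_eq_iff hqb]; linear_combination - h2
    · left; rw [hd, div_eq_iff hqb]; linear_combination - h2
  rcases key with k | k
  · exact hq.2 _ hab2 k
  · have : q ^ ((a - b) * 2) = 1 := by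
      rw [zpow_mul, k]; norm_num
    exact hq.2 _ (by omega) this


section Coord

variable (m₁ m₂ : ℤ × ℤ)

/-- the `m₁`-coordinate (degree) of `x` w.r.t. the basis `{m₁, m₂}` -/
def dmf (x : ℤ × ℤ) : ℤ := detZ m₁ m₂ * (x.1 * m₂.2 - x.2 * m₂.1)

/-- the `m₂`-coordinate of `x` w.r.t. the basis `{m₁, m₂}` -/
def kmf (x : ℤ × ℤ) : ℤ := detZ m₁ m₂ * (m₁.1 * x.2 - m₁.2 * x.1)

variable {m₁ m₂}

lemma alpha_sq (hb : IsZBasis m₁ m₂) : detZ m₁ m₂ * detZ m₁ m₂ = 1 := by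
  rcases hb with h | h <;> rw [detZ, h] <;> norm_num

lemma alpha_ne (hb : IsZBasis m₁ m₂) : detZ m₁ m₂ ≠ 0 := by
  intro h
  have := alpha_sq hb
  rw [h] at this; omega

lemma rep (hb : IsZBasis m₁ m₂) (x : ℤ × ℤ) :
    (dmf m₁ m₂ x) • m₁ + (kmf m₁ m₂ x) • m₂ = x := by
  have hsq := alpha_sq hb
  have h1 : ((dmf m₁ m₂ x) • m₁ + (kmf m₁ m₂ x) • m₂).1
      = dmf m₁ m₂ x * m₁.1 + kmf m₁ m₂ x * m₂.1 := rfl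
  have h2 : ((dmf m₁ m₂ x) • m₁ + (kmf m₁ m₂ x) • m₂).2
      = dmf m₁ m₂ x * m₁.2 + kmf m₁ m₂ x * m₂.2 := rfl
  simp only [detZ] at hsq
  refine Prod.ext ?_ ?_
  · rw [h1]; simp only [dmf, kmf, detZ]; linear_combination x.1 * hsq
  · rw [h2]; simp only [dmf, kmf, detZ]; linear_combination x.2 * hsq

lemma dmf_zero : dmf m₁ m₂ (0, 0) = 0 := by simp [dmf]

lemma dmf_add (x y : ℤ × ℤ) : dmf m₁ m₂ (x + y) = dmf m₁ m₂ x + dmf m₁ m₂ y := by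
  simp only [dmf, Prod.fst_add, Prod.snd_add]; ring

lemma dmf_smul (a : ℤ) (x : ℤ × ℤ) : dmf m₁ m₂ (a • x) = a * dmf m₁ m₂ x := by
  have h1 : (a • x).1 = a * x.1 := rfl
  have h2 : (a • x).2 = a * x.2 := rfl
  simp only [dmf, h1, h2]; ring

lemma dmf_m₁ (hb : IsZBasis m₁ m₂) : dmf m₁ m₂ m₁ = 1 := by
  have hsq := alpha_sq hb
  simp only [detZ] at hsq
  simp only [dmf, detZ]; linear_combination hsq

lemma dmf_m₂ : dmf m₁ m₂ m₂ = 0 := by simp only [dmf]; ring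

lemma dmf_ne_zero_of_ne (x : ℤ × ℤ) (h : dmf m₁ m₂ x ≠ 0) : x ≠ (0, 0) := by
  intro h0; rw [h0] at h; exact h (dmf_zero)

/-- two distinct vectors with the same nonzero degree are not parallel -/
lemma eq_of_parallel (hb : IsZBasis m₁ m₂) {m m' : ℤ × ℤ}
    (h : detZ m m' = 0) (hdm : dmf m₁ m₂ m = dmf m₁ m₂ m')
    (hne : dmf m₁ m₂ m ≠ 0) : m = m' := by
  have hα := alpha_ne hb
  have r1 := rep hb m
  have r2 := rep hb m'
  set D := dmf m₁ m₂ m with hD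
  set k := kmf m₁ m₂ m with hk
  set k' := kmf m₁ m₂ m' with hk'
  rw [← hdm] at r2
  have e11 : m.1 = D * m₁.1 + k * m₂.1 := by rw [← r1]; rfl
  have e12 : m.2 = D * m₁.2 + k * m₂.2 := by rw [← r1]; rfl
  have e21 : m'.1 = D * m₁.1 + k' * m₂.1 := by rw [← r2]; rfl
  have e22 : m'.2 = D * m₁.2 + k' * m₂.2 := by rw [← r2]; rfl
  have hdet : detZ m m' = D * (k' - k) * detZ m₁ m₂ := by
    rw [detZ, e11, e12, e21, e22, detZ]; ring
  rw [hdet] at h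
  have hkk : k = k' := by
    rcases mul_eq_zero.1 h with h' | h'
    · rcases mul_eq_zero.1 h' with h'' | h''
      · exact absurd h'' hne
      · omega
    · exact absurd h' hα
  rw [← r1, ← r2, hkk]

/-- given two vectors parallel to a common nonzero vector, they are parallel -/
lemma detZ_trans {x m m' : ℤ × ℤ} (hx : x ≠ (0, 0))
    (h1 : detZ m x = 0) (h2 : detZ m' x = 0) : detZ m m' = 0 := by
  have key1 : x.1 * detZ m m' = m'.1 * detZ m x - m.1 * detZ m' x := by
    simp only [detZ]; ring
  have key2 : x.2 * detZ m m' = m'.2 * detZ m x - m.2 * detZ m' x := by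
    simp only [detZ]; ring
  rw [h1, h2] at key1 key2
  simp only [mul_zero, sub_zero, zero_sub, mul_neg, neg_zero] at key1 key2
  by_cases hx1 : x.1 = 0
  · have hx2 : x.2 ≠ 0 := by
      intro h; exact hx (Prod.ext hx1 h)
    exact (mul_eq_zero.1 key2).resolve_left hx2
  · exact (mul_eq_zero.1 key1).resolve_left hx1

end Coord

section Frob

/-- Sylvester's lemma -/
lemma sylvester {p r : ℤ} (hp : 1 ≤ p) (hr : 1 ≤ r) {u v : ℤ} (huv : u * p + v * r = 1)
    (n : ℤ) (hn : (p - 1) * (r - 1) ≤ n) : ∃ a b : ℤ, 0 ≤ a ∧ 0 ≤ b ∧ a * p + b * r = n := by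
  refine ⟨(u * n) % r, (n * v + p * ((u * n) / r)), Int.emod_nonneg _ (by omega), ?_, ?_⟩
  · have hmod : (u * n) % r = u * n - r * ((u * n) / r) := by
      rw [Int.emod_def]
    have hb : (n * v + p * ((u * n) / r)) * r = n - ((u * n) % r) * p := by
      rw [hmod]; linear_combination n * huv
    have hlt : (u * n) % r < r := Int.emod_lt_of_pos _ (by omega)
    have hnn : 0 ≤ (u * n) % r := Int.emod_nonneg _ (by omega)
    nlinarith [hb]
  · have hmod : (u * n) % r = u * n - r * ((u * n) / r) := by
      rw [Int.emod_def]
    rw [hmod]; linear_combination n * huv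

lemma frobenius_two {p r : ℤ} (hp : 0 ≤ p) (hr : 0 ≤ r) {u v : ℤ}
    (huv : u * p + v * r = 1) (c : ℤ) :
    ∃ T0 : ℤ, ∀ D : ℤ, T0 ≤ D →
      ∃ a b a' b' : ℤ, c ≤ a ∧ c ≤ b ∧ c ≤ a' ∧ c ≤ b' ∧
        a * p + b * r = D ∧ a' * p + b' * r = D ∧ (a, b) ≠ (a', b') := by
  rcases eq_or_lt_of_le hp with hp0 | hp1
  · -- p = 0, so r = 1
    have hr1 : r = 1 := by
      have h1 : r * v = 1 := by linear_combination huv + u * hp0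
      rcases Int.isUnit_iff.1 (IsUnit.of_mul_eq_one v h1) with h | h <;> omega
    refine ⟨c, fun D hD => ⟨c, D, c + 1, D, le_refl _, by omega, by omega, by omega,
      by rw [← hp0, hr1]; ring, by rw [← hp0, hr1]; ring, ?_⟩⟩
    intro h
    have := congrArg Prod.fst h
    simp at this
  · rcases eq_or_lt_of_le hr with hr0 | hr1
    · -- r = 0, so p = 1
      have hp1' : p = 1 := by
        have h1 : p * u = 1 := by linear_combination huv + v * hr0
        rcases Int.isUnit_iff.1 (IsUnit.of_mul_eq_one u h1) with h | h <;> omega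
      refine ⟨c, fun D hD => ⟨D, c, D, c + 1, by omega, le_refl _, by omega, by omega,
        by rw [← hr0, hp1']; ring, by rw [← hr0, hp1']; ring, ?_⟩⟩
      intro h
      have := congrArg Prod.snd h
      simp at this
    · -- p, r ≥ 1
      refine ⟨c * p + (c + p) * r + (p - 1) * (r - 1), fun D hD => ?_⟩
      obtain ⟨a, b, ha, hb, hab⟩ := sylvester hp1 hr1 huv (D - c * p - (c + p) * r) (by omega)
      refine ⟨c + a, c + p + b, c + a + r, c + b, by omega, by omega, by omega, by omega,
        by linear_combination hab, by linear_combination hab, ?_⟩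
      intro h
      have := congrArg Prod.fst h
      simp at this
      omega

end Frob


section Normalize

variable {m₁ m₂ : ℤ × ℤ}

lemma isZBasis_M1 {b1 b2 : ℤ × ℤ} (hb : IsZBasis b1 b2) : IsZBasis b1 (b2 + b1) := by
  simp only [IsZBasis, Prod.fst_add, Prod.snd_add] at *
  rcases hb with h | h
  · left; linear_combination h
  · right; linear_combination h

lemma isZBasis_M2 {b1 b2 : ℤ × ℤ} (hb : IsZBasis b1 b2) : IsZBasis (b1 + b2) b2 := by
  simp only [IsZBasis, Prod.fst_add, Prod.snd_add] at *
  rcases hb with h | h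
  · left; linear_combination h
  · right; linear_combination h

lemma normalize (K : ℤ × ℤ → Prop) :
    ∀ N : ℕ, ∀ b1 b2 : ℤ × ℤ, IsZBasis b1 b2 →
      (∀ a b : ℕ, K ((a : ℤ) • b1 + (b : ℤ) • b2)) →
      (dmf m₁ m₂ b1).natAbs + (dmf m₁ m₂ b2).natAbs ≤ N →
      ∃ b1' b2', IsZBasis b1' b2' ∧ (∀ a b : ℕ, K ((a : ℤ) • b1' + (b : ℤ) • b2')) ∧
        ((0 ≤ dmf m₁ m₂ b1' ∧ 0 ≤ dmf m₁ m₂ b2') ∨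
          (dmf m₁ m₂ b1' ≤ 0 ∧ dmf m₁ m₂ b2' ≤ 0)) := by
  intro N
  induction N with
  | zero =>
    intro b1 b2 hb hK hm
    exact ⟨b1, b2, hb, hK, by omega⟩
  | succ N ih =>
    intro b1 b2 hb hK hm
    by_cases h1 : (0 ≤ dmf m₁ m₂ b1 ∧ 0 ≤ dmf m₁ m₂ b2) ∨
        (dmf m₁ m₂ b1 ≤ 0 ∧ dmf m₁ m₂ b2 ≤ 0)
    · exact ⟨b1, b2, hb, hK, h1⟩
    · have hKM1 : ∀ a b : ℕ, K ((a : ℤ) • b1 + (b : ℤ) • (b2 + b1)) := by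
        intro a b
        have e : (a : ℤ) • b1 + (b : ℤ) • (b2 + b1)
            = ((a + b : ℕ) : ℤ) • b1 + (b : ℤ) • b2 := by
          push_cast
          rw [smul_add, add_smul]
          abel
        rw [e]; exact hK _ _
      have hKM2 : ∀ a b : ℕ, K ((a : ℤ) • (b1 + b2) + (b : ℤ) • b2) := by
        intro a b
        have e : (a : ℤ) • (b1 + b2) + (b : ℤ) • b2
            = (a : ℤ) • b1 + ((a + b : ℕ) : ℤ) • b2 := by
          push_cast
          rw [smul_add, add_smul]
          abel
        rw [e]; exact hK _ _
      have hd1 : dmf m₁ m₂ (b2 + b1) = dmf m₁ m₂ b2 + dmf m₁ m₂ b1 := dmf_add _ _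
      have hd2 : dmf m₁ m₂ (b1 + b2) = dmf m₁ m₂ b1 + dmf m₁ m₂ b2 := dmf_add _ _
      rcases le_or_gt (dmf m₁ m₂ b1 + dmf m₁ m₂ b2) 0 with hs | hs
      · -- use M1 if 0 < p, M2 if p < 0
        rcases (by omega : 0 < dmf m₁ m₂ b1 ∨ dmf m₁ m₂ b1 < 0) with hp | hp
        · exact ih b1 (b2 + b1) (isZBasis_M1 hb) hKM1 (by rw [hd1]; omega)
        · exact ih (b1 + b2) b2 (isZBasis_M2 hb) hKM2 (by rw [hd2]; omega)
      · rcases (by omega : 0 < dmf m₁ m₂ b1 ∨ dmf m₁ m₂ b1 < 0) with hp | hp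
        · exact ih (b1 + b2) b2 (isZBasis_M2 hb) hKM2 (by rw [hd2]; omega)
        · exact ih b1 (b2 + b1) (isZBasis_M1 hb) hKM1 (by rw [hd1]; omega)

end Normalize



section CoreDev

variable {q : ℂ} {L : Type} [LieRing L] [LieAlgebra ℂ L]
variable {V : Type} [AddCommGroup V] [Module ℂ V] [LieRingModule L V] [LieModule ℂ L V]

/-- generators of `L` -/
def genL (D : LData q L) : ZMod 2 × (ℤ × ℤ) ⊕ Fin 2 → L :=
  Sum.elim (fun p => D.t p.1 p.2) (fun k => if k = 0 then D.c1 else D.c2)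

/-- iterated bracket monomials applied to `v` -/
def appLst (D : LData q L) (lst : List (ZMod 2 × (ℤ × ℤ) ⊕ Fin 2)) (v : V) : V :=
  lst.foldr (fun g acc => ⁅genL D g, acc⁆) v

lemma t_mem_Lj (D : LData q L) {m₁ m₂ : ℤ × ℤ} (hb : IsZBasis m₁ m₂) (i : ZMod 2)
    (x : ℤ × ℤ) : D.t i x ∈ Lj D m₁ m₂ (dmf m₁ m₂ x) := by
  apply Submodule.subset_span
  apply Set.mem_union_left
  exact ⟨(i, kmf m₁ m₂ x), by simp only; rw [rep hb x]⟩

lemma act_mem {D : LData q L} {m₁ m₂ : ℤ × ℤ} (hb : IsZBasis m₁ m₂)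
    (G : GradedRep D m₁ m₂ V) (k : ℤ) (i : ZMod 2) (x : ℤ × ℤ) {u : V}
    (hu : u ∈ G.comp k) : ⁅D.t i x, u⁆ ∈ G.comp (k + dmf m₁ m₂ x) :=
  G.lie_mem _ _ _ (t_mem_Lj D hb i x) u hu

/-- the key bracket computation: killing by a sum of two annihilating directions -/
lemma kill_add {D : LData q L} (hq : Generic q) (m n : ℤ × ℤ) (i : ZMod 2)
    (h0 : m + n ≠ 0) (hdet : detZ m n ≠ 0) (u : V)
    (h1 : ⁅D.t 0 m, ⁅D.t i n, u⁆⁆ = 0) (h2 : ⁅D.t 0 m, u⁆ = 0) :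
    ⁅D.t i (m + n), u⁆ = 0 := by
  have hbt := D.bracket_tt 0 i m n
  have hif : ¬((0 : ZMod 2) + i = 0 ∧ m + n = 0) := fun h => h0 h.2
  rw [if_neg hif, zero_smul, add_zero] at hbt
  have key : ⁅(⁅D.t 0 m, D.t i n⁆ : L), u⁆ = 0 := by
    rw [lie_lie, h1, h2, lie_zero, sub_zero]
  rw [hbt, smul_lie] at key
  have hc : (sgn m.1 i * q ^ (m.2 * n.1) - sgn n.1 0 * q ^ (m.1 * n.2)) ≠ 0 := by
    apply coeff_ne_zero_s13 hq _ _ (sgn_cases _ _) (sgn_cases _ _)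
    unfold detZ at hdet; omega
  have h3 : ⁅D.t ((0 : ZMod 2) + i) (m.1 + n.1, m.2 + n.2), u⁆ = 0 :=
    (smul_eq_zero.1 key).resolve_left hc
  have e1 : ((0 : ZMod 2) + i) = i := zero_add i
  have e2 : ((m.1 + n.1, m.2 + n.2) : ℤ × ℤ) = m + n := rfl
  rwa [e1, e2] at h3

/-- every vector of `V` lies in the span of the bracket monomials on `v` -/
lemma mem_span_monomials {D : LData q L} (v : V)
    (hgen : LieSubmodule.lieSpan ℂ L {v} = ⊤) (u : V) :
    u ∈ Submodule.span ℂ {w : V | ∃ lst, w = appLst D lst v} := by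
  set M := Submodule.span ℂ {w : V | ∃ lst, w = appLst D lst v} with hM
  have hMgen : ∀ g, ∀ w ∈ M, ⁅genL D g, w⁆ ∈ M := by
    intro g w hw
    refine Submodule.span_induction ?_ ?_ ?_ ?_ hw
    · rintro w ⟨lst, rfl⟩
      exact Submodule.subset_span ⟨g :: lst, rfl⟩
    · rw [lie_zero]; exact M.zero_mem
    · intro a b _ _ ha hb; rw [lie_add]; exact M.add_mem ha hb
    · intro a b _ hb; rw [lie_smul]; exact M.smul_mem _ hb
  have hMall : ∀ x : L, ∀ w ∈ M, ⁅x, w⁆ ∈ M := by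
    have hsub : ∀ x ∈ Submodule.span ℂ
        ((Set.range fun p : ZMod 2 × (ℤ × ℤ) => D.t p.1 p.2) ∪ {D.c1, D.c2}),
        ∀ w ∈ M, ⁅x, w⁆ ∈ M := by
      intro x hx
      refine Submodule.span_induction ?_ ?_ ?_ ?_ hx
      · rintro x (⟨p, rfl⟩ | hx)
        · exact hMgen (Sum.inl p)
        · rcases hx with rfl | hx
          · exact hMgen (Sum.inr 0)
          · rw [Set.mem_singleton_iff] at hx
            subst hx
            exact hMgen (Sum.inr 1)
      · intro w _; rw [zero_lie]; exact M.zero_mem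
      · intro a b _ _ ha hb w hw; rw [add_lie]; exact M.add_mem (ha w hw) (hb w hw)
      · intro a b _ hb w hw; rw [smul_lie]; exact M.smul_mem _ (hb w hw)
    intro x
    exact hsub x (by rw [D.span_eq]; trivial)
  have hNle : LieSubmodule.lieSpan ℂ L {v} ≤
      ({ toSubmodule := M, lie_mem := fun {x w} hw => hMall x w hw } : LieSubmodule ℂ L V) := by
    rw [LieSubmodule.lieSpan_le]
    intro w hw
    rw [Set.mem_singleton_iff] at hw
    subst hw
    exact Submodule.subset_span ⟨[], rfl⟩
  rw [hgen] at hNle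
  exact hNle trivial

end CoreDev


section CoreDev2

variable {q : ℂ} {L : Type} [LieRing L] [LieAlgebra ℂ L]
variable {V : Type} [AddCommGroup V] [Module ℂ V] [LieRingModule L V] [LieModule ℂ L V]

/-- `u` is killed by all `t i x` with both `{b1,b2}`-coordinates of `x` at least `c`. -/
def ConeKill (D : LData q L) (b1 b2 : ℤ × ℤ) (u : V) (c : ℤ) : Prop :=
  ∀ x : ℤ × ℤ, c ≤ dmf b1 b2 x → c ≤ kmf b1 b2 x → ∀ i, ⁅D.t i x, u⁆ = 0

lemma kmf_add {b1 b2 : ℤ × ℤ} (x y : ℤ × ℤ) :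
    kmf b1 b2 (x + y) = kmf b1 b2 x + kmf b1 b2 y := by
  simp only [kmf, Prod.fst_add, Prod.snd_add]; ring

lemma coords_eq_zero_s13 {b1 b2 : ℤ × ℤ} {x : ℤ × ℤ} (hb : IsZBasis b1 b2)
    (h1 : dmf b1 b2 x = 0) (h2 : kmf b1 b2 x = 0) : x = 0 := by
  have := rep hb x
  rw [h1, h2] at this
  simp only [zero_smul, add_zero] at this
  exact this.symm

/-- cone annihilation of the monomials -/
lemma coneKill_monomial {D : LData q L} (hq : Generic q) {b1 b2 : ℤ × ℤ}
    (hbb : IsZBasis b1 b2) (v : V)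
    (hkill : ∀ a b : ℕ, ∀ i, ⁅D.t i ((a : ℤ) • b1 + (b : ℤ) • b2), v⁆ = 0)
    (lst : List (ZMod 2 × (ℤ × ℤ) ⊕ Fin 2)) :
    ∃ c : ℤ, ConeKill D b1 b2 (appLst D lst v) c := by
  induction lst with
  | nil =>
    refine ⟨0, fun x h1 h2 i => ?_⟩
    have hx : x = ((dmf b1 b2 x).toNat : ℤ) • b1 + ((kmf b1 b2 x).toNat : ℤ) • b2 := by
      rw [Int.toNat_of_nonneg h1, Int.toNat_of_nonneg h2, rep hbb x]
    rw [show appLst D [] v = v from rfl, hx]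
    exact hkill _ _ i
  | cons g lst ih =>
    obtain ⟨c, hc⟩ := ih
    rcases g with ⟨ε, n⟩ | k
    · refine ⟨max (max c (c - dmf b1 b2 n)) (max (c - kmf b1 b2 n) (1 - dmf b1 b2 n)),
        fun x h1 h2 i => ?_⟩
      simp only [le_max_iff, max_le_iff] at h1 h2
      have hx1 : c ≤ dmf b1 b2 x := by omega
      have hx2 : c ≤ kmf b1 b2 x := by omega
      have hxn1 : c ≤ dmf b1 b2 (x + n) := by rw [dmf_add]; omega
      have hxn2 : c ≤ kmf b1 b2 (x + n) := by rw [kmf_add]; omega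
      have hxn0 : x + n ≠ 0 := by
        intro h
        have := dmf_add (m₁ := b1) (m₂ := b2) x n
        rw [h] at this
        have h0 : dmf b1 b2 (0 : ℤ × ℤ) = 0 := by simp [dmf]
        omega
      have hfold : appLst D ((Sum.inl (ε, n)) :: lst) v = ⁅D.t ε n, appLst D lst v⁆ := rfl
      rw [hfold, leibniz_lie]
      have hterm2 : ⁅D.t ε n, ⁅D.t i x, appLst D lst v⁆⁆ = 0 := by
        rw [hc x hx1 hx2 i, lie_zero]
      rw [hterm2, add_zero]
      have hbt := D.bracket_tt i ε x n
      have hif : ¬(i + ε = 0 ∧ x + n = 0) := fun h => hxn0 h.2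
      rw [if_neg hif, zero_smul, add_zero] at hbt
      rw [hbt, smul_lie]
      have e2 : ((x.1 + n.1, x.2 + n.2) : ℤ × ℤ) = x + n := rfl
      rw [e2, hc (x + n) hxn1 hxn2 (i + ε), smul_zero]
    · refine ⟨c, fun x h1 h2 i => ?_⟩
      have hfold : appLst D ((Sum.inr k) :: lst) v
          = ⁅(if k = 0 then D.c1 else D.c2), appLst D lst v⁆ := rfl
      rw [hfold, leibniz_lie]
      have hcent : (⁅D.t i x, (if k = 0 then D.c1 else D.c2)⁆ : L) = 0 := by
        split
        · rw [← lie_skew, D.c1_central, neg_zero]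
        · rw [← lie_skew, D.c2_central, neg_zero]
      rw [hcent, zero_lie, zero_add, hc x h1 h2 i, lie_zero]

/-- every vector has a cone annihilator -/
lemma coneKill_vec {D : LData q L} (hq : Generic q) {b1 b2 : ℤ × ℤ}
    (hbb : IsZBasis b1 b2) (v : V)
    (hgen : LieSubmodule.lieSpan ℂ L {v} = ⊤)
    (hkill : ∀ a b : ℕ, ∀ i, ⁅D.t i ((a : ℤ) • b1 + (b : ℤ) • b2), v⁆ = 0)
    (u : V) : ∃ c : ℤ, ConeKill D b1 b2 u c := by
  have hu := mem_span_monomials (D := D) v hgen u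
  refine Submodule.span_induction ?_ ?_ ?_ ?_ hu
  · rintro w ⟨lst, rfl⟩
    exact coneKill_monomial hq hbb v hkill lst
  · exact ⟨0, fun x _ _ i => lie_zero _⟩
  · rintro a b _ _ ⟨ca, hca⟩ ⟨cb, hcb⟩
    exact ⟨max ca cb, fun x h1 h2 i => by
      rw [lie_add, hca x (le_trans (le_max_left _ _) h1) (le_trans (le_max_left _ _) h2) i,
        hcb x (le_trans (le_max_right _ _) h1) (le_trans (le_max_right _ _) h2) i, add_zero]⟩
  · rintro a w _ ⟨c, hcw⟩
    exact ⟨c, fun x h1 h2 i => by rw [lie_smul, hcw x h1 h2 i, smul_zero]⟩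

end CoreDev2


section CoreDev3

variable {q : ℂ} {L : Type} [LieRing L] [LieAlgebra ℂ L]
variable {V : Type} [AddCommGroup V] [Module ℂ V] [LieRingModule L V] [LieModule ℂ L V]

/-- quasifiniteness gives a uniform cone annihilator for each graded component -/
lemma coneKill_comp {D : LData q L} (hq : Generic q) {m₁ m₂ : ℤ × ℤ}
    (G : GradedRep D m₁ m₂ V) (hqf : G.Quasifinite) {b1 b2 : ℤ × ℤ}
    (hbb : IsZBasis b1 b2) (v : V)
    (hgen : LieSubmodule.lieSpan ℂ L {v} = ⊤)
    (hkill : ∀ a b : ℕ, ∀ i, ⁅D.t i ((a : ℤ) • b1 + (b : ℤ) • b2), v⁆ = 0)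
    (e : ℤ) : ∃ c : ℤ, ∀ u ∈ G.comp e, ConeKill D b1 b2 u c := by
  by_contra hcon
  push_neg at hcon
  have step : ∀ c : ℤ, ∃ (u : V) (x : ℤ × ℤ) (i : ZMod 2) (c' : ℤ),
      c ≤ c' ∧ u ∈ G.comp e ∧ c ≤ dmf b1 b2 x ∧ c ≤ kmf b1 b2 x ∧
      ⁅D.t i x, u⁆ ≠ 0 ∧ ConeKill D b1 b2 u c' := by
    intro c
    obtain ⟨u, hu, hnk⟩ := hcon c
    rw [ConeKill] at hnk
    push_neg at hnk
    obtain ⟨x, hx1, hx2, i, hne⟩ := hnk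
    obtain ⟨c', hc'⟩ := coneKill_vec hq hbb v hgen hkill u
    refine ⟨u, x, i, max c c', le_max_left _ _, hu, hx1, hx2, hne, ?_⟩
    intro y hy1 hy2 j
    exact hc' y (le_trans (le_max_right _ _) hy1) (le_trans (le_max_right _ _) hy2) j
  choose fu fx fi fc hcle hmem hcoord1 hcoord2 halive hck using step
  -- the recursively defined increasing sequence of depths
  let cseq : ℕ → ℤ := fun n => Nat.rec 0 (fun _ c => fc c) n
  have hcseq_succ : ∀ n, cseq (n + 1) = fc (cseq n) := fun n => rfl
  have hmono : ∀ k n : ℕ, k ≤ n → cseq k ≤ cseq n := by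
    intro k n hkn
    induction n with
    | zero => simp_all
    | succ n ih =>
      rcases Nat.lt_or_ge k (n+1) with h | h
      · exact le_trans (ih (by omega)) (by rw [hcseq_succ]; exact hcle _)
      · have : k = n + 1 := by omega
        rw [this]
  haveI := hqf e
  set N := Module.finrank ℂ (G.comp e) with hN
  have hw : ∀ t : Fin (N + 1), fu (cseq t) ∈ G.comp e := fun t => hmem _
  have hli : LinearIndependent ℂ (fun t : Fin (N + 1) => (⟨fu (cseq t), hw t⟩ : G.comp e)) := by
    rw [Fintype.linearIndependent_iff]
    intro g hg
    by_contra hne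
    push_neg at hne
    obtain ⟨t1, ht1⟩ := hne
    have hSne : (Finset.univ.filter (fun t : Fin (N+1) => g t ≠ 0)).Nonempty :=
      ⟨t1, Finset.mem_filter.2 ⟨Finset.mem_univ _, ht1⟩⟩
    set S := Finset.univ.filter (fun t : Fin (N+1) => g t ≠ 0) with hS
    set t₀ := S.max' hSne with ht₀def
    have ht₀S : t₀ ∈ S := S.max'_mem hSne
    have ht₀ : g t₀ ≠ 0 := (Finset.mem_filter.1 ht₀S).2
    have hgV : (∑ t : Fin (N+1), g t • fu (cseq t)) = (0 : V) := by
      have := congrArg (Subtype.val) hg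
      simpa using this
    set X := D.t (fi (cseq t₀)) (fx (cseq t₀)) with hX
    have happ : (∑ t : Fin (N+1), g t • ⁅X, fu (cseq t)⁆) = (0 : V) := by
      have h2 := congrArg (fun z => (LieModule.toEnd ℂ L V X) z) hgV
      simp only [map_sum, map_smul, LieModule.toEnd_apply_apply, map_zero] at h2
      exact h2
    have hsingle : ∀ t : Fin (N+1), t ≠ t₀ → g t • ⁅X, fu (cseq t)⁆ = 0 := by
      intro t ht
      by_cases hgt : g t = 0
      · rw [hgt, zero_smul]
      · have htS : t ∈ S := Finset.mem_filter.2 ⟨Finset.mem_univ _, hgt⟩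
        have hlt : t < t₀ := lt_of_le_of_ne (S.le_max' t htS) ht
        have hkill0 : ⁅X, fu (cseq t)⁆ = 0 := by
          apply hck (cseq t)
          · calc fc (cseq t) = cseq (t + 1) := (hcseq_succ t).symm
              _ ≤ cseq t₀ := hmono _ _ (by exact_mod_cast hlt)
              _ ≤ dmf b1 b2 (fx (cseq t₀)) := hcoord1 _
          · calc fc (cseq t) = cseq (t + 1) := (hcseq_succ t).symm
              _ ≤ cseq t₀ := hmono _ _ (by exact_mod_cast hlt)
              _ ≤ kmf b1 b2 (fx (cseq t₀)) := hcoord2 _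
        rw [hkill0, smul_zero]
    have hfin : g t₀ • ⁅X, fu (cseq t₀)⁆ = 0 := by
      rw [← happ]
      exact (Finset.sum_eq_single_of_mem t₀ (Finset.mem_univ _)
        (fun t _ ht => hsingle t ht)).symm
    rcases smul_eq_zero.1 hfin with h | h
    · exact ht₀ h
    · exact halive _ h
  have hcard := hli.fintype_card_le_finrank
  simp only [Fintype.card_fin] at hcard
  omega

end CoreDev3


section CoreDev4

lemma kmf_smul {b1 b2 : ℤ × ℤ} (a : ℤ) (x : ℤ × ℤ) :
    kmf b1 b2 (a • x) = a * kmf b1 b2 x := by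
  have h1 : (a • x).1 = a * x.1 := rfl
  have h2 : (a • x).2 = a * x.2 := rfl
  simp only [kmf, h1, h2]; ring

lemma kmf_m₁ {b1 b2 : ℤ × ℤ} : kmf b1 b2 b1 = 0 := by simp only [kmf]; ring

lemma kmf_m₂ {b1 b2 : ℤ × ℤ} (hb : IsZBasis b1 b2) : kmf b1 b2 b2 = 1 := by
  have hsq := alpha_sq hb
  simp only [detZ] at hsq
  simp only [kmf, detZ]; linear_combination hsq

lemma comb_coords {b1 b2 : ℤ × ℤ} (hbb : IsZBasis b1 b2) (a b : ℤ) :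
    dmf b1 b2 (a • b1 + b • b2) = a ∧ kmf b1 b2 (a • b1 + b • b2) = b := by
  constructor
  · rw [dmf_add, dmf_smul, dmf_smul, dmf_m₁ hbb, dmf_m₂]; ring
  · rw [kmf_add, kmf_smul, kmf_smul, kmf_m₁, kmf_m₂ hbb]; ring

lemma detZ_self (x : ℤ × ℤ) : detZ x x = 0 := by simp only [detZ]; ring

lemma detZ_sub_self (m x : ℤ × ℤ) : detZ m (x - m) = detZ m x := by
  simp only [detZ, Prod.fst_sub, Prod.snd_sub]; ring

lemma detZ_add_left (x y z : ℤ × ℤ) : detZ (x + y) z = detZ x z + detZ y z := by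
  simp only [detZ, Prod.fst_add, Prod.snd_add]; ring

lemma detZ_smul_left (a : ℤ) (x z : ℤ × ℤ) : detZ (a • x) z = a * detZ x z := by
  have h1 : (a • x).1 = a * x.1 := rfl
  have h2 : (a • x).2 = a * x.2 := rfl
  simp only [detZ, h1, h2]; ring

lemma detZ_m₂_ne {m₁ m₂ : ℤ × ℤ} {x : ℤ × ℤ} (hx : dmf m₁ m₂ x ≠ 0) :
    detZ m₂ x ≠ 0 := by
  intro h
  apply hx
  have : dmf m₁ m₂ x = -(detZ m₁ m₂ * detZ m₂ x) := by simp only [dmf, detZ]; ring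
  rw [this, h]; ring

variable {q : ℂ} {L : Type} [LieRing L] [LieAlgebra ℂ L]
variable {V : Type} [AddCommGroup V] [Module ℂ V] [LieRingModule L V] [LieModule ℂ L V]

/-- `t` is a valid (signed) half-plane annihilation threshold for the component `ε * e` -/
def ValidT (D : LData q L) {m₁ m₂ : ℤ × ℤ} (G : GradedRep D m₁ m₂ V) (ε : ℤ)
    (e t : ℤ) : Prop :=
  ∀ x : ℤ × ℤ, t ≤ ε * dmf m₁ m₂ x → ∀ i, ∀ u ∈ G.comp (ε * e), ⁅D.t i x, u⁆ = 0

lemma validT_mono {D : LData q L} {m₁ m₂ : ℤ × ℤ} {G : GradedRep D m₁ m₂ V} {ε : ℤ}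
    {e t t' : ℤ} (h : ValidT D G ε e t) (htt : t ≤ t') : ValidT D G ε e t' :=
  fun x hx i u hu => h x (le_trans htt hx) i u hu

/-- every component admits some valid half-plane threshold -/
lemma half_exists {D : LData q L} (hq : Generic q) {m₁ m₂ : ℤ × ℤ}
    (hb : IsZBasis m₁ m₂) (G : GradedRep D m₁ m₂ V) (hqf : G.Quasifinite)
    {b1 b2 : ℤ × ℤ} (hbb : IsZBasis b1 b2) (v : V)
    (hgen : LieSubmodule.lieSpan ℂ L {v} = ⊤)
    (hkill : ∀ a b : ℕ, ∀ i, ⁅D.t i ((a : ℤ) • b1 + (b : ℤ) • b2), v⁆ = 0)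
    (ε : ℤ) (hε : ε * ε = 1)
    (hp : 0 ≤ ε * dmf m₁ m₂ b1) (hr : 0 ≤ ε * dmf m₁ m₂ b2)
    (e : ℤ) : ∃ t : ℤ, 1 ≤ t ∧ ValidT D G ε e t := by
  -- gcd of the degrees is 1
  have hgcd : ∃ a b : ℤ, a * (ε * dmf m₁ m₂ b1) + b * (ε * dmf m₁ m₂ b2) = 1 := by
    have h1 := rep hbb m₁
    have h2 : dmf m₁ m₂ (dmf b1 b2 m₁ • b1 + kmf b1 b2 m₁ • b2) = 1 := by
      rw [h1]; exact dmf_m₁ hb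
    rw [dmf_add, dmf_smul, dmf_smul] at h2
    exact ⟨ε * dmf b1 b2 m₁, ε * kmf b1 b2 m₁, by linear_combination (dmf b1 b2 m₁ * dmf m₁ m₂ b1 + kmf b1 b2 m₁ * dmf m₁ m₂ b2) * hε + h2⟩
  obtain ⟨c1, hc1⟩ := coneKill_comp hq G hqf hbb v hgen hkill (ε * e)
  obtain ⟨c2, hc2⟩ := coneKill_comp hq G hqf hbb v hgen hkill (ε * (e - 1))
  set c := max c1 c2 with hc
  obtain ⟨u₀, v₀, huv⟩ := hgcd
  obtain ⟨T0, hT0⟩ := frobenius_two hp hr huv c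
  refine ⟨max T0 1, le_max_right _ _, ?_⟩
  intro x hx i u hu
  set t' := ε * dmf m₁ m₂ x with ht'def
  have ht'1 : 1 ≤ t' := le_trans (le_max_right _ _) hx
  have ht'T : T0 ≤ t' + 1 := by
    have := le_trans (le_max_left _ _) hx
    omega
  obtain ⟨a, b, a', b', ha, hb', ha', hb'', hs1, hs2, hpair⟩ := hT0 (t' + 1) ht'T
  have hdx : dmf m₁ m₂ x ≠ 0 := by
    intro h
    rw [ht'def, h, mul_zero] at ht'1
    omega
  have hx0 : x ≠ (0, 0) := dmf_ne_zero_of_ne x hdx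
  have hlevel : ∀ (A B : ℤ), A * (ε * dmf m₁ m₂ b1) + B * (ε * dmf m₁ m₂ b2) = t' + 1 →
      ε * dmf m₁ m₂ (A • b1 + B • b2) = t' + 1 := by
    intro A B hAB
    rw [dmf_add, dmf_smul, dmf_smul]
    linear_combination hAB
  have hm1 := hlevel a b hs1
  have hm2 := hlevel a' b' hs2
  -- one of the two cone points is non-parallel to x
  have hmm : ∃ mm : ℤ × ℤ, c ≤ dmf b1 b2 mm ∧ c ≤ kmf b1 b2 mm ∧
      ε * dmf m₁ m₂ mm = t' + 1 ∧ detZ mm x ≠ 0 := by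
    by_cases hd1 : detZ (a • b1 + b • b2) x = 0
    · refine ⟨a' • b1 + b' • b2, by rw [(comb_coords hbb a' b').1]; exact ha', by
        rw [(comb_coords hbb a' b').2]; exact hb'', hm2, ?_⟩
      intro hd2
      have hpar := detZ_trans hx0 hd1 hd2
      have heq : (a • b1 + b • b2) = (a' • b1 + b' • b2) := by
        apply eq_of_parallel hb hpar
        · have : dmf m₁ m₂ (a • b1 + b • b2) = ε * (t' + 1) := by
            linear_combination ε * hm1 - (dmf m₁ m₂ (a • b1 + b • b2)) * hε
          have h2 : dmf m₁ m₂ (a' • b1 + b' • b2) = ε * (t' + 1) := by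
            linear_combination ε * hm2 - (dmf m₁ m₂ (a' • b1 + b' • b2)) * hε
          rw [this, h2]
        · intro h
          rw [h, mul_zero] at hm1
          omega
      apply hpair
      have e1 := congrArg (dmf b1 b2) heq
      have e2 := congrArg (kmf b1 b2) heq
      rw [(comb_coords hbb a b).1, (comb_coords hbb a' b').1] at e1
      rw [(comb_coords hbb a b).2, (comb_coords hbb a' b').2] at e2
      rw [e1, e2]
    · exact ⟨a • b1 + b • b2, by rw [(comb_coords hbb a b).1]; exact ha,
        by rw [(comb_coords hbb a b).2]; exact hb', hm1, hd1⟩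
  obtain ⟨mm, hmc1, hmc2, hmlev, hmdet⟩ := hmm
  set y := x - mm with hy
  have hmy : mm + y = x := by rw [hy]; abel
  have hdety : detZ mm y ≠ 0 := by rw [hy, detZ_sub_self]; exact hmdet
  have hydeg : dmf m₁ m₂ y = -ε := by
    have h1 : dmf m₁ m₂ x = dmf m₁ m₂ mm + dmf m₁ m₂ y := by
      rw [← dmf_add, hmy]
    have hdx2 : dmf m₁ m₂ x = ε * t' := by
      linear_combination (-ε) * ht'def - dmf m₁ m₂ x * hε
    have hmm2 : dmf m₁ m₂ mm = ε * (t' + 1) := by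
      linear_combination ε * hmlev - dmf m₁ m₂ mm * hε
    linear_combination (-1 : ℤ) * h1 + hdx2 - hmm2
  have hinner : ⁅D.t i y, u⁆ ∈ G.comp (ε * (e - 1)) := by
    have := act_mem hb G (ε * e) i y hu
    rw [hydeg] at this
    have heq : ε * e + -ε = ε * (e - 1) := by ring
    rwa [heq] at this
  have h1 : ⁅D.t 0 mm, ⁅D.t i y, u⁆⁆ = 0 :=
    hc2 _ hinner mm (le_trans (le_max_right _ _) hmc1) (le_trans (le_max_right _ _) hmc2) 0
  have h2 : ⁅D.t 0 mm, u⁆ = 0 :=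
    hc1 u hu mm (le_trans (le_max_left _ _) hmc1) (le_trans (le_max_left _ _) hmc2) 0
  have hkey := kill_add hq mm y i (by rw [hmy]; exact fun h => hx0 h) hdety u h1 h2
  rwa [hmy] at hkey

end CoreDev4


section CoreDev5

variable {q : ℂ} {L : Type} [LieRing L] [LieAlgebra ℂ L]
variable {V : Type} [AddCommGroup V] [Module ℂ V] [LieRingModule L V] [LieModule ℂ L V]

/-- threshold improvement step -/
lemma step_valid {D : LData q L} (hq : Generic q) {m₁ m₂ : ℤ × ℤ}
    (hb : IsZBasis m₁ m₂) {G : GradedRep D m₁ m₂ V} {ε : ℤ} (hε : ε * ε = 1)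
    {e t : ℤ} (ht : 2 ≤ t) (hVe : ValidT D G ε e t) (hVe1 : ValidT D G ε (e - 1) t) :
    ValidT D G ε e (t - 1) := by
  intro x hx i u hu
  rcases le_or_gt t (ε * dmf m₁ m₂ x) with h | h
  · exact hVe x h i u hu
  have hxd : ε * dmf m₁ m₂ x = t - 1 := by omega
  have hdx : dmf m₁ m₂ x ≠ 0 := by
    intro h0; rw [h0, mul_zero] at hxd; omega
  have hx0 : x ≠ (0, 0) := dmf_ne_zero_of_ne x hdx
  have hz0 : detZ m₂ x ≠ 0 := detZ_m₂_ne hdx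
  set k : ℤ := if detZ (ε • m₁) x = 0 then 1 else 0 with hk
  set w : ℤ × ℤ := ε • m₁ + k • m₂ with hw
  have hdw : detZ w x ≠ 0 := by
    by_cases hcase : detZ (ε • m₁) x = 0
    · have hk1 : k = 1 := by rw [hk, if_pos hcase]
      rw [hw, hk1, one_smul, detZ_add_left, hcase, zero_add]
      exact hz0
    · have hk0 : k = 0 := by rw [hk, if_neg hcase]
      have h0 : detZ ((0 : ℤ) • m₂) x = 0 := by
        rw [detZ_smul_left]; ring
      rw [hw, hk0, detZ_add_left, h0, add_zero]
      exact hcase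
  have hdwdeg : dmf m₁ m₂ w = ε := by
    rw [hw, dmf_add, dmf_smul, dmf_smul, dmf_m₁ hb, dmf_m₂]; ring
  set mm := x + w with hmm
  have hmmdeg : ε * dmf m₁ m₂ mm = t := by
    rw [hmm, dmf_add, hdwdeg]
    linear_combination hxd + hε
  set y := x - mm with hy
  have hmy : mm + y = x := by rw [hy]; abel
  have hdety : detZ mm y ≠ 0 := by
    rw [hy, detZ_sub_self, hmm, detZ_add_left, detZ_self, zero_add]
    exact hdw
  have hydeg : dmf m₁ m₂ y = -ε := by
    have h1 : dmf m₁ m₂ x = dmf m₁ m₂ mm + dmf m₁ m₂ y := by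
      rw [← dmf_add, hmy]
    have h2 : dmf m₁ m₂ mm = dmf m₁ m₂ x + ε := by
      rw [hmm, dmf_add, hdwdeg]
    linear_combination (-1 : ℤ) * h1 - h2
  have hinner : ⁅D.t i y, u⁆ ∈ G.comp (ε * (e - 1)) := by
    have := act_mem hb G (ε * e) i y hu
    rw [hydeg] at this
    have heq : ε * e + -ε = ε * (e - 1) := by ring
    rwa [heq] at this
  have h1 : ⁅D.t 0 mm, ⁅D.t i y, u⁆⁆ = 0 :=
    hVe1 mm (le_of_eq hmmdeg.symm) 0 _ hinner
  have h2 : ⁅D.t 0 mm, u⁆ = 0 := hVe mm (le_of_eq hmmdeg.symm) 0 u hu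
  have hkey := kill_add hq mm y i (by rw [hmy]; exact fun h' => hx0 h') hdety u h1 h2
  rwa [hmy] at hkey

/-- the core dichotomy: some nonzero component is annihilated by the (signed) positive part -/
lemma core_main {D : LData q L} (hq : Generic q) {m₁ m₂ : ℤ × ℤ}
    (hb : IsZBasis m₁ m₂) (G : GradedRep D m₁ m₂ V) (hqf : G.Quasifinite)
    {b1 b2 : ℤ × ℤ} (hbb : IsZBasis b1 b2) (dg : ℤ) (v : V) (hvc : v ∈ G.comp dg)
    (hv0 : v ≠ 0) (hgen : LieSubmodule.lieSpan ℂ L {v} = ⊤)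
    (hkill : ∀ a b : ℕ, ∀ i, ⁅D.t i ((a : ℤ) • b1 + (b : ℤ) • b2), v⁆ = 0)
    (ε : ℤ) (hε : ε * ε = 1)
    (hp : 0 ≤ ε * dmf m₁ m₂ b1) (hr : 0 ≤ ε * dmf m₁ m₂ b2) :
    ∃ e : ℤ, G.comp (ε * e) ≠ ⊥ ∧ ValidT D G ε e 1 := by
  by_contra hcon
  push_neg at hcon
  have hhalf : ∀ e : ℤ, ∃ n : ℕ, ValidT D G ε e (1 + (n : ℤ)) := by
    intro e
    obtain ⟨t, ht1, hval⟩ := half_exists hq hb G hqf hbb v hgen hkill ε hε hp hr e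
    exact ⟨(t - 1).toNat, validT_mono hval (by omega)⟩
  classical
  set H : ℤ → ℤ := fun e => 1 + ((Nat.find (hhalf e) : ℕ) : ℤ) with hH
  have hHvalid : ∀ e, ValidT D G ε e (H e) := fun e => Nat.find_spec (hhalf e)
  have hH1 : ∀ e, 1 ≤ H e := fun e => by
    show (1 : ℤ) ≤ 1 + ((Nat.find (hhalf e) : ℕ) : ℤ)
    omega
  have hHmin : ∀ e t, ValidT D G ε e t → 1 ≤ t → H e ≤ t := by
    intro e t hval h1
    have : ValidT D G ε e (1 + ((t - 1).toNat : ℤ)) := by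
      have : (1 : ℤ) + ((t - 1).toNat : ℤ) = t := by omega
      rwa [this]
    have hfind := Nat.find_min' (hhalf e) this
    show (1 : ℤ) + ((Nat.find (hhalf e) : ℕ) : ℤ) ≤ t
    omega
  have h2e : ∀ e, G.comp (ε * e) ≠ ⊥ → 2 ≤ H e := by
    intro e hne
    by_contra hlt
    have h1 : H e = 1 := by have := hH1 e; omega
    exact hcon e hne (h1 ▸ hHvalid e)
  have hdown : ∀ e, G.comp (ε * e) ≠ ⊥ →
      G.comp (ε * (e - 1)) ≠ ⊥ ∧ H e + 1 ≤ H (e - 1) := by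
    intro e hne
    have hkey : ¬ ValidT D G ε (e - 1) (H e) := by
      intro hv1
      have hstep := step_valid hq hb hε (h2e e hne) (hHvalid e) hv1
      have := hHmin e (H e - 1) hstep (by have := h2e e hne; omega)
      omega
    constructor
    · intro hbot
      apply hkey
      intro x hx i u hu
      rw [hbot] at hu
      rw [Submodule.mem_bot] at hu
      rw [hu, lie_zero]
    · by_contra hlt
      exact hkey (validT_mono (hHvalid (e - 1)) (by omega))
  have hsupp0 : G.comp (ε * (ε * dg)) ≠ ⊥ := by
    have : ε * (ε * dg) = dg := by linear_combination dg * hε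
    rw [this]
    intro hbot
    rw [hbot] at hvc
    rw [Submodule.mem_bot] at hvc
    exact hv0 hvc
  set e₀ : ℤ := ε * dg with he₀
  by_cases hall : ∀ n : ℕ, G.comp (ε * (e₀ + (n : ℤ))) ≠ ⊥
  · have hchain : ∀ n : ℕ, H (e₀ + (n : ℤ)) + (n : ℤ) ≤ H e₀ := by
      intro n
      induction n with
      | zero => simp
      | succ n ih =>
        have hstep := (hdown (e₀ + ((n : ℤ) + 1)) (by
          have := hall (n + 1); push_cast at this ⊢; convert this using 3 <;> push_cast <;> ring)).2
        have heq : e₀ + ((n : ℤ) + 1) - 1 = e₀ + (n : ℤ) := by ring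
        rw [heq] at hstep
        push_cast
        push_cast at ih
        omega
    have hcontra := hchain (H e₀).toNat
    have h1 := hH1 (e₀ + ((H e₀).toNat : ℤ))
    have h2 := hH1 e₀
    omega
  · push_neg at hall
    set n₀ := Nat.find hall with hn₀
    have hn₀spec : G.comp (ε * (e₀ + (n₀ : ℤ))) = ⊥ := Nat.find_spec hall
    have hn₀min : ∀ m : ℕ, m < n₀ → G.comp (ε * (e₀ + (m : ℤ))) ≠ ⊥ := fun m hm =>
      Nat.find_min hall hm
    have hn₀pos : 0 < n₀ := by
      rcases Nat.eq_zero_or_pos n₀ with h | h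
      · exfalso
        apply hsupp0
        have := hn₀spec
        rw [h] at this
        simpa using this
      · exact h
    set ep : ℤ := e₀ + (n₀ : ℤ) - 1 with hep
    have hepne : G.comp (ε * ep) ≠ ⊥ := by
      have := hn₀min (n₀ - 1) (by omega)
      have heq : e₀ + ((n₀ - 1 : ℕ) : ℤ) = ep := by rw [hep]; push_cast; omega
      rwa [heq] at this
    -- everything above ep is ⊥
    have hdc : ∀ j : ℕ, G.comp (ε * (e₀ + (n₀ : ℤ) + (j : ℤ))) = ⊥ := by
      intro j
      induction j with
      | zero => simpa using hn₀spec
      | succ j ih =>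
        by_contra hne
        have := (hdown (e₀ + (n₀ : ℤ) + ((j : ℤ) + 1)) (by
          push_cast at hne ⊢; convert hne using 3 <;> push_cast <;> ring)).1
        have heq : e₀ + (n₀ : ℤ) + ((j : ℤ) + 1) - 1 = e₀ + (n₀ : ℤ) + (j : ℤ) := by ring
        rw [heq] at this
        exact this ih
    have hvalid1 : ValidT D G ε ep 1 := by
      intro x hx i u hu
      have hmem := act_mem hb G (ε * ep) i x hu
      have heq : ε * ep + dmf m₁ m₂ x = ε * (ep + ε * dmf m₁ m₂ x) := by
        linear_combination (- dmf m₁ m₂ x) * hε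
      rw [heq] at hmem
      have hbig : ∃ j : ℕ, ep + ε * dmf m₁ m₂ x = e₀ + (n₀ : ℤ) + (j : ℤ) := by
        refine ⟨(ε * dmf m₁ m₂ x - 1).toNat, ?_⟩
        rw [hep]; omega
      obtain ⟨j, hj⟩ := hbig
      rw [hj, hdc j, Submodule.mem_bot] at hmem
      rw [hmem]
    exact hcon ep hepne hvalid1

end CoreDev5


section CoreDev6

variable {q : ℂ} {L : Type} [LieRing L] [LieAlgebra ℂ L]
variable {V : Type} [AddCommGroup V] [Module ℂ V] [LieRingModule L V] [LieModule ℂ L V]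

/-- the Lie span of a nonzero homogeneous vector in an irreducible graded module is
everything -/
lemma lieSpan_graded_top {D : LData q L} {m₁ m₂ : ℤ × ℤ} (hb : IsZBasis m₁ m₂)
    (G : GradedRep D m₁ m₂ V) (hirr : G.IsIrreducible) {k₀ : ℤ} {w : V}
    (hw : w ∈ G.comp k₀) (hw0 : w ≠ 0) :
    LieSubmodule.lieSpan ℂ L {w} = ⊤ := by
  set N := LieSubmodule.lieSpan ℂ L {w} with hN
  set N' : Submodule ℂ V := ⨆ k : ℤ, (N : Submodule ℂ V) ⊓ G.comp k with hN'
  have hA : ∀ x : L, ∀ u ∈ N', ⁅x, u⁆ ∈ N' := by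
    have hgen : ∀ g : ZMod 2 × (ℤ × ℤ) ⊕ Fin 2, ∀ u ∈ N', ⁅genL D g, u⁆ ∈ N' := by
      intro g u hu
      have hmemLj : ∀ (g : ZMod 2 × (ℤ × ℤ) ⊕ Fin 2), ∃ j : ℤ, genL D g ∈ Lj D m₁ m₂ j := by
        rintro (⟨i, n⟩ | k)
        · exact ⟨dmf m₁ m₂ n, t_mem_Lj D hb i n⟩
        · refine ⟨0, Submodule.subset_span (Set.mem_union_right _ ?_)⟩
          rw [if_pos rfl]
          show (if k = 0 then D.c1 else D.c2) ∈ ({D.c1, D.c2} : Set L)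
          split
          · exact Set.mem_insert _ _
          · exact Set.mem_insert_of_mem _ rfl
      obtain ⟨j, hj⟩ := hmemLj g
      refine Submodule.iSup_induction' (p := fun k : ℤ => (N : Submodule ℂ V) ⊓ G.comp k)
        (motive := fun z _ => ⁅genL D g, z⁆ ∈ N') ?_ ?_ ?_ hu
      · intro k z hz
        rcases hz with ⟨hz1, hz2⟩
        have hz1' : z ∈ N := hz1
        have h1 : ⁅genL D g, z⁆ ∈ N := N.lie_mem hz1'
        have h2 : ⁅genL D g, z⁆ ∈ G.comp (k + j) := G.lie_mem j k _ hj z hz2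
        exact Submodule.mem_iSup_of_mem (k + j) ⟨h1, h2⟩
      · show ⁅genL D g, (0 : V)⁆ ∈ N'
        rw [lie_zero]; exact N'.zero_mem
      · intro z z' _ _ hz hz'
        show ⁅genL D g, z + z'⁆ ∈ N'
        rw [lie_add]; exact N'.add_mem hz hz'
    intro x
    have hsub : ∀ x ∈ Submodule.span ℂ
        ((Set.range fun p : ZMod 2 × (ℤ × ℤ) => D.t p.1 p.2) ∪ {D.c1, D.c2}),
        ∀ u ∈ N', ⁅x, u⁆ ∈ N' := by
      intro x hx
      refine Submodule.span_induction ?_ ?_ ?_ ?_ hx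
      · rintro x (⟨p, rfl⟩ | hx)
        · exact hgen (Sum.inl p)
        · rcases hx with rfl | hx
          · exact hgen (Sum.inr 0)
          · rw [Set.mem_singleton_iff] at hx
            subst hx
            exact hgen (Sum.inr 1)
      · intro u _; rw [zero_lie]; exact N'.zero_mem
      · intro a b _ _ ha hb' u hu; rw [add_lie]; exact N'.add_mem (ha u hu) (hb' u hu)
      · intro a b _ hb' u hu; rw [smul_lie]; exact N'.smul_mem _ (hb' u hu)
    exact hsub x (by rw [D.span_eq]; trivial)
  have hwN : w ∈ N := LieSubmodule.subset_lieSpan rfl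
  have hgraded : G.IsGradedSub N := by
    rw [GradedRep.IsGradedSub]
    refine le_antisymm ?_ (iSup_le fun k => inf_le_left)
    have hle : N ≤ ({ toSubmodule := N', lie_mem := fun {x u} hu => hA x u hu } :
        LieSubmodule ℂ L V) := by
      rw [hN, LieSubmodule.lieSpan_le]
      intro z hz
      rw [Set.mem_singleton_iff] at hz
      subst hz
      exact Submodule.mem_iSup_of_mem k₀ ⟨hwN, hw⟩
    intro z hz
    exact hle hz
  rcases hirr.2 N hgraded with h | h
  · exfalso
    rw [h] at hwN
    exact hw0 (by simpa using hwN)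
  · exact h

end CoreDev6


/-- a quasifinite irreducible ℤ-graded `L`-module which is a generalized
highest weight module is a highest weight module or a lowest weight module. -/
theorem GHW_quasifinite_is_HW_or_LW (q : ℂ) (hq : Generic q)
    {L : Type} [LieRing L] [LieAlgebra ℂ L] (D : LData q L)
    (m₁ m₂ : ℤ × ℤ) (hb : IsZBasis m₁ m₂)
    {V : Type} [AddCommGroup V] [Module ℂ V] [LieRingModule L V] [LieModule ℂ L V]
    (G : GradedRep D m₁ m₂ V) (hirr : G.IsIrreducible)
    (hqf : G.Quasifinite) (hghw : G.IsGHW) :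
    G.IsHW ∨ G.IsLW := by
  obtain ⟨b1₀, b2₀, hbasis₀, dg, v, hvc, hv0, hgen, hkill₀⟩ := hghw
  obtain ⟨b1, b2, hbb, hkill, hsign⟩ := normalize (m₁ := m₁) (m₂ := m₂)
    (fun x => ∀ i, ⁅D.t i x, v⁆ = 0)
    ((dmf m₁ m₂ b1₀).natAbs + (dmf m₁ m₂ b2₀).natAbs) b1₀ b2₀ hbasis₀
    (fun a b i => hkill₀ a b i) le_rfl
  have hkill' : ∀ a b : ℕ, ∀ i, ⁅D.t i ((a : ℤ) • b1 + (b : ℤ) • b2), v⁆ = 0 :=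
    fun a b i => hkill a b i
  rcases hsign with ⟨hp0, hr0⟩ | ⟨hp0, hr0⟩
  · -- highest weight case
    obtain ⟨e, hne, hval⟩ := core_main hq hb G hqf hbb dg v hvc hv0 hgen hkill' 1
      (by norm_num) (by rw [one_mul]; exact hp0) (by rw [one_mul]; exact hr0)
    obtain ⟨w, hwmem, hw0⟩ := Submodule.exists_mem_ne_zero_of_ne_bot hne
    have hwmem' : w ∈ G.comp e := by rwa [one_mul] at hwmem
    refine Or.inl ⟨e, w, hwmem', hw0, lieSpan_graded_top hb G hirr hwmem' hw0, ?_⟩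
    intro j hj x hx
    have hgen' : ∀ y ∈ ((Set.range fun p : ZMod 2 × ℤ => D.t p.1 (j • m₁ + p.2 • m₂)) ∪
        (if j = 0 then {D.c1, D.c2} else ∅) : Set L), ⁅y, w⁆ = 0 := by
      intro y hy
      rcases hy with ⟨p, rfl⟩ | hy
      · have hdeg : dmf m₁ m₂ (j • m₁ + p.2 • m₂) = j := by
          rw [dmf_add, dmf_smul, dmf_smul, dmf_m₁ hb, dmf_m₂]; ring
        exact hval _ (by rw [one_mul, hdeg]; omega) p.1 w hwmem
      · rw [if_neg (by omega : ¬ j = 0)] at hy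
        exact absurd hy (Set.notMem_empty y)
    refine Submodule.span_induction (fun y hy => hgen' y hy) (zero_lie w) ?_ ?_ hx
    · intro a b _ _ ha hb'
      rw [add_lie, ha, hb', add_zero]
    · intro a y _ hy
      rw [smul_lie, hy, smul_zero]
  · -- lowest weight case
    obtain ⟨e, hne, hval⟩ := core_main hq hb G hqf hbb dg v hvc hv0 hgen hkill' (-1)
      (by norm_num) (by rw [neg_one_mul]; omega) (by rw [neg_one_mul]; omega)
    obtain ⟨w, hwmem, hw0⟩ := Submodule.exists_mem_ne_zero_of_ne_bot hne
    have hwmem' : w ∈ G.comp (-e) := by rwa [neg_one_mul] at hwmem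
    refine Or.inr ⟨-e, w, hwmem', hw0, lieSpan_graded_top hb G hirr hwmem' hw0, ?_⟩
    intro j hj x hx
    have hgen' : ∀ y ∈ ((Set.range fun p : ZMod 2 × ℤ => D.t p.1 (j • m₁ + p.2 • m₂)) ∪
        (if j = 0 then {D.c1, D.c2} else ∅) : Set L), ⁅y, w⁆ = 0 := by
      intro y hy
      rcases hy with ⟨p, rfl⟩ | hy
      · have hdeg : dmf m₁ m₂ (j • m₁ + p.2 • m₂) = j := by
          rw [dmf_add, dmf_smul, dmf_smul, dmf_m₁ hb, dmf_m₂]; ring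
        exact hval _ (by rw [neg_one_mul, hdeg]; omega) p.1 w hwmem
      · rw [if_neg (by omega : ¬ j = 0)] at hy
        exact absurd hy (Set.notMem_empty y)
    refine Submodule.span_induction (fun y hy => hgen' y hy) (zero_lie w) ?_ ?_ hx
    · intro a b _ _ ha hb'
      rw [add_lie, ha, hb', add_zero]
    · intro a y _ hy
      rw [smul_lie, hy, smul_zero]


end QTorus
end
end
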